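/- arXiv:1603.05429 — 4 statements merged into one kernel-verified Lean document; each statement's English description precedes it below -/
import Mathlib

section
/- For all positive integers n, k and q with q ≥ 3·n^{2^k/(2^k−1)}, Waiter has a strategy in the Client-Waiter game with bias q played on the board E(K_n) guaranteeing that Client's final graph contains no path with 2k edges; in other words, P(n,q) < 2k. -/
open Finset

variable {α : Type*}

/-- Auxiliary definition: `fuel` bounds the number of remaining rounds; `C` is the set of
elements claimed by Client so far; `F` is the set of free (unclaimed) elements.
`ClientCanAux q P fuel C F` says that Client can guarantee that his final claimed set
satisfies `P` in the Client-Waiter game with bias `q`: in each round Waiter offers a set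
`O` of at least one and at most `q+1` free elements, Client claims one element of `O`,
and Waiter claims the rest. -/
def ClientCanAux [DecidableEq α] (q : ℕ) (P : Finset α → Prop) :
    ℕ → Finset α → Finset α → Prop
  | 0, C, F => F = ∅ ∧ P C
  | fuel + 1, C, F =>
    if F = ∅ then P C
    else ∀ O ⊆ F, O.Nonempty → O.card ≤ q + 1 →
      ∃ x ∈ O, ClientCanAux q P fuel (insert x C) (F \ O)

/-- Client has a strategy in the Client-Waiter game with bias `q` on the board `X`
guaranteeing that the set of elements he has claimed at the end of the game satisfies `P`. -/
def ClientCanForce [DecidableEq α] (X : Finset α) (q : ℕ) (P : Finset α → Prop) : Prop :=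
  ClientCanAux q P X.card ∅ X

/-- Analogue of `ClientCanAux` for Waiter. -/
def WaiterCanAux [DecidableEq α] (q : ℕ) (P : Finset α → Prop) :
    ℕ → Finset α → Finset α → Prop
  | 0, C, F => F = ∅ ∧ P C
  | fuel + 1, C, F =>
    if F = ∅ then P C
    else ∃ O ⊆ F, O.Nonempty ∧ O.card ≤ q + 1 ∧
      ∀ x ∈ O, WaiterCanAux q P fuel (insert x C) (F \ O)

/-- Waiter has a strategy in the Client-Waiter game with bias `q` on the board `X`
guaranteeing that the set of elements claimed by Client at the end of the game
satisfies `P`. -/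
def WaiterCanForce [DecidableEq α] (X : Finset α) (q : ℕ) (P : Finset α → Prop) : Prop :=
  WaiterCanAux q P X.card ∅ X

/-- Client's graph: the graph whose edges are the edges claimed by Client. -/
def clientGraph {V : Type*} (C : Finset (Sym2 V)) : SimpleGraph V :=
  SimpleGraph.fromEdgeSet (↑C)

/-- The board for games played on `K_n`: the edge set of the complete graph on `n` vertices. -/
def Kboard (n : ℕ) : Finset (Sym2 (Fin n)) :=
  (⊤ : SimpleGraph (Fin n)).edgeFinset

/-- `G` contains a copy of `H`. -/
def ContainsCopy {W V : Type*} (H : SimpleGraph W) (G : SimpleGraph V) : Prop :=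
  ∃ f : W → V, Function.Injective f ∧ ∀ ⦃a b : W⦄, H.Adj a b → G.Adj (f a) (f b)

/-- The 2-density `d₂(H)` of a graph `H`. -/
noncomputable def twoDensity {β : Type*} (H : SimpleGraph β) : ℝ :=
  if 3 ≤ Nat.card β then ((H.edgeSet.ncard : ℝ) - 1) / ((Nat.card β : ℝ) - 2) else 0

/-- The maximum 2-density `m₂(H)` of a graph `H`. -/
noncomputable def maxTwoDensity {β : Type*} (H : SimpleGraph β) : ℝ :=
  sSup {x : ℝ | ∃ H' : H.Subgraph, 3 ≤ H'.verts.ncard ∧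
    x = ((H'.edgeSet.ncard : ℝ) - 1) / ((H'.verts.ncard : ℝ) - 2)}

/-- The maximum density `m(G)` of a graph `G`. -/
noncomputable def maxDensity {β : Type*} (G : SimpleGraph β) : ℝ :=
  sSup {x : ℝ | ∃ G' : G.Subgraph, G'.verts.Nonempty ∧
    x = (G'.edgeSet.ncard : ℝ) / (G'.verts.ncard : ℝ)}

/-- The arboricity `ar(G)` of a graph `G`. -/
noncomputable def arboricity {β : Type*} (G : SimpleGraph β) : ℝ :=
  sSup {x : ℝ | ∃ G' : G.Subgraph, 2 ≤ G'.verts.ncard ∧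
    x = (G'.edgeSet.ncard : ℝ) / ((G'.verts.ncard : ℝ) - 1)}

/-- `H` is strictly 2-balanced: every proper subgraph with at least 3 vertices has
strictly smaller 2-density. -/
def StrictlyTwoBalanced {β : Type*} (H : SimpleGraph β) : Prop :=
  ∀ H' : H.Subgraph, H' ≠ ⊤ → 3 ≤ H'.verts.ncard → twoDensity H'.coe < twoDensity H

open Classical in
/-- The probability that Client has a winning strategy in the `H`-game `CW(G_{n,p}, H, q)`,
where the random graph `G_{n,p}` is generated by keeping each edge of `K_n` independently
with probability `p`. -/
noncomputable def probClientWinsHGame {β : Type*} (H : SimpleGraph β) (q n : ℕ) (p : ℝ) : ℝ :=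
  ∑ E ∈ (Kboard n).powerset,
    p ^ E.card * (1 - p) ^ ((Kboard n).card - E.card) *
      (if ClientCanForce E q (fun C => ContainsCopy H (clientGraph C)) then 1 else 0)

/-- Vertices of the complete `k`-ary rooted tree of height `k`: a vertex at depth `i ≤ k`
is a sequence of `i` choices among `k` children. -/
abbrev TreeVert (k : ℕ) : Type := (i : Fin (k + 1)) × (Fin (i : ℕ) → Fin k)

/-- `u` is a child of `v` in the complete `k`-ary tree. -/
def IsChildOf {k : ℕ} (u v : TreeVert k) : Prop :=
  ∃ h : (u.1 : ℕ) = (v.1 : ℕ) + 1,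
    ∀ t : Fin (v.1 : ℕ), u.2 ⟨t.1, by have := t.2; omega⟩ = v.2 t

/-- The complete `k`-ary tree of height `k`, `T_{k,k}`. -/
def Tkk (k : ℕ) : SimpleGraph (TreeVert k) where
  Adj u v := IsChildOf u v ∨ IsChildOf v u
  symm := by constructor; intro u v h; tauto
  loopless := by
    constructor
    intro u h
    rcases h with ⟨h, _⟩ | ⟨h, _⟩ <;> omega

section GameLemmas

variable [DecidableEq α] {q : ℕ} {P P' : Finset α → Prop}

theorem waiterAux_empty {C : Finset α} (hP : P C) : ∀ f, WaiterCanAux q P f C ∅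
  | 0 => ⟨rfl, hP⟩
  | f + 1 => by simp [WaiterCanAux, hP]

theorem waiterAux_succ : ∀ {f : ℕ} {C F : Finset α},
    WaiterCanAux q P f C F → WaiterCanAux q P (f + 1) C F := by
  intro f
  induction f with
  | zero =>
    intro C F h
    obtain ⟨h1, h2⟩ := h
    subst h1
    simp [WaiterCanAux, h2]
  | succ f ih =>
    intro C F h
    by_cases hF : F = ∅
    · simp only [WaiterCanAux, if_pos hF] at h ⊢
      exact h
    · simp only [WaiterCanAux, if_neg hF] at h ⊢
      obtain ⟨O, hO, hne, hcard, hx⟩ := h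
      exact ⟨O, hO, hne, hcard, fun x hxO => ih (hx x hxO)⟩

theorem waiterAux_mono {f g : ℕ} (hfg : f ≤ g) {C F : Finset α}
    (h : WaiterCanAux q P f C F) : WaiterCanAux q P g C F := by
  induction g with
  | zero => exact (Nat.le_zero.mp hfg) ▸ h
  | succ g ih =>
    rcases Nat.lt_or_ge f (g+1) with hlt | hge
    · exact waiterAux_succ (ih (by omega))
    · exact (Nat.le_antisymm hfg hge) ▸ h

theorem waiterAux_adapt : ∀ {f : ℕ} {C F : Finset α},
    WaiterCanAux q P f C F → (∀ C', P C' → P' C') → WaiterCanAux q P' f C F := by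
  intro f
  induction f with
  | zero => intro C F h himp; exact ⟨h.1, himp _ h.2⟩
  | succ f ih =>
    intro C F h himp
    by_cases hF : F = ∅
    · simp only [WaiterCanAux, if_pos hF] at h ⊢
      exact himp _ h
    · simp only [WaiterCanAux, if_neg hF] at h ⊢
      obtain ⟨O, hO, hne, hcard, hx⟩ := h
      exact ⟨O, hO, hne, hcard, fun x hxO => ih (hx x hxO) himp⟩

theorem waiterAux_onebatch {C F : Finset α} (hcard : F.card ≤ q + 1) (h0 : P C)
    (h1 : ∀ x ∈ F, P (insert x C)) : WaiterCanAux q P F.card C F := by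
  rcases eq_or_ne F ∅ with rfl | hF
  · exact waiterAux_empty h0 _
  · have hpos : 0 < F.card := Finset.card_pos.mpr (Finset.nonempty_iff_ne_empty.mpr hF)
    obtain ⟨m, hm⟩ : ∃ m, F.card = m + 1 := ⟨F.card - 1, by omega⟩
    rw [hm]
    simp only [WaiterCanAux, if_neg hF]
    refine ⟨F, Finset.Subset.refl F, Finset.nonempty_iff_ne_empty.mpr hF, hm ▸ hcard, ?_⟩
    intro x hx
    rw [Finset.sdiff_self]
    exact waiterAux_empty (h1 x hx) m

end GameLemmas
open Finset

section GraphLemmas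

variable {V : Type*}

/-- No path with `L` or more edges in the graph with edge set `D`. -/
def NP (L : ℕ) (D : Finset (Sym2 V)) : Prop :=
  ∀ (u v : V) (p : (SimpleGraph.fromEdgeSet (↑D : Set (Sym2 V))).Walk u v),
    p.IsPath → p.length < L

theorem mem_support_of_mem_edges'' {G : SimpleGraph V} {u v w : V} (p : G.Walk u v)
    {e : Sym2 V} (he : e ∈ p.edges) (hw : w ∈ e) : w ∈ p.support := by
  induction e with
  | _ a b =>
    rcases Sym2.mem_iff.mp hw with rfl | rfl
    · exact p.fst_mem_support_of_mem_edges he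
    · exact p.snd_mem_support_of_mem_edges he

theorem length_le_card [DecidableEq V] {D : Finset (Sym2 V)} {u v : V}
    (p : (SimpleGraph.fromEdgeSet (↑D : Set (Sym2 V))).Walk u v) (hp : p.IsPath) :
    p.length ≤ D.card := by
  have hsub : p.edges.toFinset ⊆ D := by
    intro e he
    rw [List.mem_toFinset] at he
    have h := p.edges_subset_edgeSet he
    rw [SimpleGraph.edgeSet_fromEdgeSet] at h
    exact h.1
  calc p.length = p.edges.length := (p.length_edges).symm
    _ = p.edges.toFinset.card := (List.toFinset_card_of_nodup hp.edges_nodup).symm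
    _ ≤ D.card := Finset.card_le_card hsub

theorem exists_other_edge {G : SimpleGraph V} {a b : V} (p : G.Walk a b) (hp : p.IsPath)
    {e : Sym2 V} (he : e ∈ p.edges) {x : V} (hx : x ∈ e) (hxa : x ≠ a) (hxb : x ≠ b) :
    ∃ e' ∈ p.edges, e' ≠ e ∧ x ∈ e' := by
  induction p with
  | nil => simp at he
  | @cons a c b hadj p ih =>
    rw [SimpleGraph.Walk.cons_isPath_iff] at hp
    obtain ⟨hp1, hp2⟩ := hp
    rw [SimpleGraph.Walk.edges_cons, List.mem_cons] at he
    rcases he with rfl | heD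
    · -- e = s(a,c)
      have hxc : x = c := by
        rcases Sym2.mem_iff.mp hx with rfl | rfl
        · exact absurd rfl hxa
        · rfl
      subst hxc
      cases p with
      | nil => exact absurd rfl hxb
      | @cons cc d bb hadj' p' =>
        refine ⟨s(x, d), ?_, ?_, Sym2.mem_mk_left x d⟩
        · rw [SimpleGraph.Walk.edges_cons, SimpleGraph.Walk.edges_cons]
          exact List.mem_cons_of_mem _ (List.mem_cons_self)
        · intro hcon
          rw [Sym2.eq_iff] at hcon
          rcases hcon with ⟨h1, h2⟩ | ⟨h1, h2⟩
          · exact hadj.ne h1.symm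
          · apply hp2
            rw [SimpleGraph.Walk.support_cons]
            exact List.mem_cons_of_mem _ (h2 ▸ p'.start_mem_support)
    · by_cases hxc : x = c
      · subst hxc
        refine ⟨s(a, x), List.mem_cons_self, ?_, Sym2.mem_mk_right a x⟩
        intro hcon
        apply hp2
        exact mem_support_of_mem_edges'' p (hcon ▸ heD) (Sym2.mem_mk_left a x)
      · obtain ⟨e', he', hne, hxe'⟩ := ih hp1 heD hxc hxb
        exact ⟨e', by rw [SimpleGraph.Walk.edges_cons]; exact List.mem_cons_of_mem _ he',
          hne, hxe'⟩

theorem walk_tail {G : SimpleGraph V} {a b : V} (p : G.Walk a b) (hp : p.IsPath)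
    (h1 : 1 ≤ p.length) :
    ∃ (c : V) (q : G.Walk c b), q.IsPath ∧ q.length + 1 = p.length ∧
      ∀ e ∈ q.edges, e ∈ p.edges ∧ ∀ w ∈ e, w ≠ a := by
  cases p with
  | nil => simp at h1
  | @cons a c b hadj p =>
    rw [SimpleGraph.Walk.cons_isPath_iff] at hp
    refine ⟨c, p, hp.1, by simp, ?_⟩
    intro e he
    refine ⟨by rw [SimpleGraph.Walk.edges_cons]; exact List.mem_cons_of_mem _ he, ?_⟩
    intro w hw hcon
    exact hp.2 (hcon ▸ mem_support_of_mem_edges'' p he hw)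

theorem exists_middle_walk {G : SimpleGraph V} {a b : V} (p : G.Walk a b) (hp : p.IsPath)
    (h2 : 2 ≤ p.length) :
    ∃ (c d : V) (q : G.Walk c d), q.IsPath ∧ q.length + 2 = p.length ∧
      ∀ e ∈ q.edges, e ∈ p.edges ∧ ∀ w ∈ e, w ≠ a ∧ w ≠ b := by
  obtain ⟨c, q₁, hq₁, hlen₁, hed₁⟩ := walk_tail p hp (by omega)
  obtain ⟨d, q₂, hq₂, hlen₂, hed₂⟩ := walk_tail q₁.reverse hq₁.reverse
    (by rw [SimpleGraph.Walk.length_reverse]; omega)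
  refine ⟨d, c, q₂, hq₂, by rw [SimpleGraph.Walk.length_reverse] at hlen₂; omega, ?_⟩
  intro e he
  obtain ⟨he₁, hwb⟩ := hed₂ e he
  rw [SimpleGraph.Walk.edges_reverse, List.mem_reverse] at he₁
  obtain ⟨hep, hwa⟩ := hed₁ e he₁
  exact ⟨hep, fun w hw => ⟨hwa w hw, hwb w hw⟩⟩

end GraphLemmas

section CliqueE

variable [DecidableEq V]

/-- The edge set of the clique on vertex set `S`. -/
def cliqueE (S : Finset V) : Finset (Sym2 V) :=
  S.sym2.filter (fun e => ¬ e.IsDiag)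

theorem mem_cliqueE {S : Finset V} {e : Sym2 V} :
    e ∈ cliqueE S ↔ (∀ w ∈ e, w ∈ S) ∧ ¬ e.IsDiag := by
  simp [cliqueE, Finset.mem_sym2_iff]

theorem mem_of_mem_cliqueE {S : Finset V} {e : Sym2 V} (he : e ∈ cliqueE S) {w : V}
    (hw : w ∈ e) : w ∈ S :=
  (mem_cliqueE.mp he).1 w hw

theorem cliqueE_mono {U S : Finset V} (h : U ⊆ S) : cliqueE U ⊆ cliqueE S := by
  intro e he
  rw [mem_cliqueE] at he ⊢
  exact ⟨fun w hw => h (he.1 w hw), he.2⟩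

theorem cliqueE_eq_empty {S : Finset V} (h : S.card ≤ 1) : cliqueE S = ∅ := by
  ext e
  simp only [Finset.notMem_empty, iff_false]
  intro he
  rw [mem_cliqueE] at he
  induction e with
  | _ a b =>
    have ha : a ∈ S := he.1 a (Sym2.mem_mk_left a b)
    have hb : b ∈ S := he.1 b (Sym2.mem_mk_right a b)
    have : a = b := Finset.card_le_one.mp h a ha b hb
    exact he.2 (by rw [Sym2.mk_isDiag_iff]; exact this)

theorem two_mul_card_cliqueE_le (S : Finset V) :
    2 * (cliqueE S).card ≤ S.card * (S.card + 1) := by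
  have h1 : (cliqueE S).card ≤ S.sym2.card := Finset.card_le_card (Finset.filter_subset _ _)
  have h2 : S.sym2.card = (S.card + 1).choose 2 := Finset.card_sym2 S
  have h3 : (S.card + 1).choose 2 = (S.card + 1) * S.card / 2 := by
    rw [Nat.choose_two_right]
    simp
  have h4 : ((S.card + 1) * S.card / 2) * 2 ≤ (S.card + 1) * S.card :=
    Nat.div_mul_le_self _ 2
  have h5 : (S.card + 1) * S.card = S.card * (S.card + 1) := Nat.mul_comm _ _
  omega

end CliqueE

section Combo

variable [DecidableEq V]

theorem combo (k : ℕ) (hk : 1 ≤ k) (U : Finset V) (D D₂ : Finset (Sym2 V))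
    (hstruct : ∀ e ∈ D, ∃ v, v ∈ e ∧ v ∉ U ∧ (D.filter (fun e' => v ∈ e')).card ≤ 1)
    (hD₂ : D₂ ⊆ cliqueE U) (hNP : NP (2 * k) D₂) :
    NP (2 * k + 2) (D ∪ D₂) := by
  intro u v p hp
  by_contra hcon
  push_neg at hcon
  have h2 : 2 ≤ p.length := by omega
  obtain ⟨c, d, pm, hpm, hlen, hedges⟩ := exists_middle_walk p hp h2
  have hmemDD : ∀ e ∈ p.edges, e ∈ D ∪ D₂ ∧ ¬ e.IsDiag := by
    intro e he
    have h := p.edges_subset_edgeSet he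
    rw [SimpleGraph.edgeSet_fromEdgeSet] at h
    exact ⟨by exact_mod_cast h.1, h.2⟩
  have hD₂mem : ∀ e ∈ pm.edges,
      e ∈ (SimpleGraph.fromEdgeSet (↑D₂ : Set (Sym2 V))).edgeSet := by
    intro e he
    obtain ⟨hep, hav⟩ := hedges e he
    obtain ⟨heDD, hediag⟩ := hmemDD e hep
    rw [SimpleGraph.edgeSet_fromEdgeSet]
    refine ⟨?_, hediag⟩
    rcases Finset.mem_union.mp heDD with heD | heD₂
    · exfalso
      obtain ⟨w, hwe, hwU, hdeg⟩ := hstruct e heD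
      obtain ⟨hwa, hwb⟩ := hav w hwe
      obtain ⟨e', he'p, he'ne, hwe'⟩ := exists_other_edge p hp hep hwe hwa hwb
      have he'D : e' ∈ D := by
        rcases Finset.mem_union.mp (hmemDD e' he'p).1 with h | h
        · exact h
        · exact absurd (mem_of_mem_cliqueE (hD₂ h) hwe') hwU
      have hsub2 : ({e, e'} : Finset (Sym2 V)) ⊆ D.filter (fun e'' => w ∈ e'') := by
        intro f hf
        rcases Finset.mem_insert.mp hf with rfl | hf
        · exact Finset.mem_filter.mpr ⟨heD, hwe⟩
        · rw [Finset.mem_singleton] at hf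
          subst hf
          exact Finset.mem_filter.mpr ⟨he'D, hwe'⟩
      have : 2 ≤ (D.filter (fun e'' => w ∈ e'')).card := by
        calc 2 = ({e, e'} : Finset (Sym2 V)).card := (Finset.card_pair he'ne.symm).symm
          _ ≤ _ := Finset.card_le_card hsub2
      omega
    · exact Finset.mem_coe.mpr heD₂
  set pm₂ := pm.transfer _ hD₂mem with hpm₂
  have hlen₂ : pm₂.length = pm.length := SimpleGraph.Walk.length_transfer _ _
  have hpath₂ : pm₂.IsPath := by
    rw [SimpleGraph.Walk.isPath_def] at hpm ⊢
    rw [hpm₂, SimpleGraph.Walk.support_transfer]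
    exact hpm
  have := hNP c d pm₂ hpath₂
  omega

end Combo

section MainPhase

variable {V : Type*} [DecidableEq V]

theorem main_phase (q k : ℕ) (hk : 1 ≤ k) (S : Finset V) (C₀ : Finset (Sym2 V))
    (s : ℕ) (hs : 0 < s) (hsq : s * S.card ≤ q + 1)
    (IH : ∀ (U : Finset V) (C₁ : Finset (Sym2 V)), s * U.card ≤ S.card + 2 * s →
      WaiterCanAux q (fun C => ∃ D₂, D₂ ⊆ cliqueE U ∧ C = C₁ ∪ D₂ ∧ NP (2 * k) D₂)
        (cliqueE U).card C₁ (cliqueE U)) :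
    ∀ (N : ℕ) (U : Finset V) (D : Finset (Sym2 V)),
      U.card ≤ N → U ⊆ S → D ⊆ cliqueE S →
      (∀ e ∈ D, ∃ v, v ∈ e ∧ v ∉ U ∧ (D.filter (fun e' => v ∈ e')).card ≤ 1) →
      (s * (U.filter (fun v => ∃ e ∈ D, v ∈ e)).card + U.card ≤ S.card + s ∨
        (U.filter (fun v => ¬ ∃ e ∈ D, v ∈ e) = ∅ ∧
          s * (U.filter (fun v => ∃ e ∈ D, v ∈ e)).card ≤ S.card + 2 * s)) →
      WaiterCanAux q (fun C => ∃ D', D' ⊆ cliqueE S ∧ C = C₀ ∪ D' ∧ NP (2 * k + 2) D')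
        (cliqueE U).card (C₀ ∪ D) (cliqueE U) := by
  intro N
  induction N with
  | zero =>
    intro U D hUN hUS hD hstruct _
    have hU0 : U.card = 0 := Nat.le_zero.mp hUN
    have hUe : cliqueE U = ∅ := cliqueE_eq_empty (by omega)
    rw [hUe]
    refine waiterAux_empty ⟨D, hD, rfl, ?_⟩ _
    have := combo k hk U D ∅ hstruct (Finset.empty_subset _)
      (fun u v p hp => by
        have := length_le_card p hp
        simp only [Finset.card_empty] at this
        omega)
    simpa using this
  | succ N ih =>
    intro U D hUN hUS hD hstruct hcount
    by_cases hUe : cliqueE U = ∅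
    · rw [hUe]
      refine waiterAux_empty ⟨D, hD, rfl, ?_⟩ _
      have := combo k hk U D ∅ hstruct (Finset.empty_subset _)
        (fun u v p hp => by
          have := length_le_card p hp
          simp only [Finset.card_empty] at this
          omega)
      simpa using this
    by_cases hfresh : U.filter (fun v => ¬ ∃ e ∈ D, v ∈ e) = ∅
    · -- endgame: no fresh vertices, recurse into level k strategy
      have hattach : U.filter (fun v => ∃ e ∈ D, v ∈ e) = U := by
        apply Finset.filter_true_of_mem
        intro v hv
        by_contra hcon
        have : v ∈ U.filter (fun v => ¬ ∃ e ∈ D, v ∈ e) := Finset.mem_filter.mpr ⟨hv, hcon⟩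
        rw [hfresh] at this
        exact absurd this (Finset.notMem_empty v)
      have hcnt : s * U.card ≤ S.card + 2 * s := by
        rcases hcount with hleft | ⟨_, hright⟩
        · rw [hattach] at hleft; omega
        · rw [hattach] at hright; omega
      refine waiterAux_adapt (IH U (C₀ ∪ D) hcnt) ?_
      rintro C' ⟨D₂, hD₂, rfl, hNP₂⟩
      exact ⟨D ∪ D₂, Finset.union_subset hD (hD₂.trans (cliqueE_mono hUS)),
        Finset.union_assoc C₀ D D₂, combo k hk U D D₂ hstruct hD₂ hNP₂⟩
    · -- a main-phase round
      have hfne : (U.filter (fun v => ¬ ∃ e ∈ D, v ∈ e)).Nonempty :=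
        Finset.nonempty_iff_ne_empty.mpr hfresh
      obtain ⟨Z, hZF, hZcard⟩ := Finset.exists_subset_card_eq
        (min_le_right s (U.filter (fun v => ¬ ∃ e ∈ D, v ∈ e)).card)
      have hZne : Z.Nonempty := by
        rw [← Finset.card_pos, hZcard]
        exact lt_min hs (Finset.card_pos.mpr hfne)
      have hZU : Z ⊆ U := hZF.trans (Finset.filter_subset _ _)
      have hZs : Z.card ≤ s := hZcard ▸ min_le_left _ _
      set O := cliqueE U \ cliqueE (U \ Z) with hO
      -- membership decomposition for O
      have hOmem : ∀ x ∈ O, ∃ z w, x = s(z, w) ∧ z ∈ Z ∧ w ∈ U ∧ z ≠ w := by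
        intro x hx
        obtain ⟨hxU, hxnot⟩ := Finset.mem_sdiff.mp hx
        induction x with
        | _ a b =>
          have haU : a ∈ U := mem_of_mem_cliqueE hxU (Sym2.mem_mk_left a b)
          have hbU : b ∈ U := mem_of_mem_cliqueE hxU (Sym2.mem_mk_right a b)
          have hab : a ≠ b := by
            intro hcon
            exact (mem_cliqueE.mp hxU).2 (Sym2.mk_isDiag_iff.mpr hcon)
          have hZab : a ∈ Z ∨ b ∈ Z := by
            by_contra hcon
            push_neg at hcon
            apply hxnot
            rw [mem_cliqueE]
            refine ⟨?_, (mem_cliqueE.mp hxU).2⟩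
            intro w hw
            rcases Sym2.mem_iff.mp hw with rfl | rfl
            · exact Finset.mem_sdiff.mpr ⟨haU, hcon.1⟩
            · exact Finset.mem_sdiff.mpr ⟨hbU, hcon.2⟩
          rcases hZab with hz | hz
          · exact ⟨a, b, rfl, hz, hbU, hab⟩
          · exact ⟨b, a, Sym2.eq_swap, hz, haU, hab.symm⟩
      have hOsubF : O ⊆ cliqueE U := Finset.sdiff_subset
      -- O is nonempty
      have hOne : O.Nonempty := by
        obtain ⟨e₀, he₀⟩ := Finset.nonempty_iff_ne_empty.mpr hUe
        obtain ⟨z, hz⟩ := hZne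
        have hzU : z ∈ U := hZU hz
        obtain ⟨a, b, hab, haU, hbU⟩ : ∃ a b, a ≠ b ∧ a ∈ U ∧ b ∈ U := by
          induction e₀ with
          | _ a b =>
            exact ⟨a, b, fun hcon => (mem_cliqueE.mp he₀).2 (Sym2.mk_isDiag_iff.mpr hcon),
              mem_of_mem_cliqueE he₀ (Sym2.mem_mk_left a b),
              mem_of_mem_cliqueE he₀ (Sym2.mem_mk_right a b)⟩
        refine ⟨s(z, if a = z then b else a), ?_⟩
        have hu'U : (if a = z then b else a) ∈ U := by split <;> assumption
        have hu'ne : (if a = z then b else a) ≠ z := by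
          split
          · rename_i hh; rw [← hh]; exact hab.symm
          · assumption
        rw [hO, Finset.mem_sdiff]
        constructor
        · rw [mem_cliqueE]
          constructor
          · intro w hw
            rcases Sym2.mem_iff.mp hw with rfl | rfl
            · exact hzU
            · exact hu'U
          · rw [Sym2.mk_isDiag_iff]
            exact fun hcon => hu'ne hcon.symm
        · intro hcon
          have := mem_of_mem_cliqueE hcon (Sym2.mem_mk_left z _)
          exact (Finset.mem_sdiff.mp this).2 hz
      -- card bound for O
      have hOcard : O.card ≤ q + 1 := by
        have hsub : O ⊆ Z.biUnion (fun z => U.image (fun w => s(z, w))) := by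
          intro x hx
          obtain ⟨z, w, rfl, hz, hw, _⟩ := hOmem x hx
          exact Finset.mem_biUnion.mpr ⟨z, hz, Finset.mem_image.mpr ⟨w, hw, rfl⟩⟩
        calc O.card ≤ (Z.biUnion (fun z => U.image (fun w => s(z, w)))).card :=
              Finset.card_le_card hsub
          _ ≤ ∑ z ∈ Z, (U.image (fun w => s(z, w))).card := Finset.card_biUnion_le
          _ ≤ ∑ _z ∈ Z, U.card := Finset.sum_le_sum (fun _ _ => Finset.card_image_le)
          _ = Z.card * U.card := by rw [Finset.sum_const, smul_eq_mul]
          _ ≤ s * S.card := Nat.mul_le_mul hZs (Finset.card_le_card hUS)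
          _ ≤ q + 1 := hsq
      -- F \ O
      have hFO : cliqueE U \ O = cliqueE (U \ Z) := by
        rw [hO, Finset.sdiff_sdiff_self_left]
        exact Finset.inter_eq_right.mpr (cliqueE_mono Finset.sdiff_subset)
      have hcard1 : 1 ≤ (cliqueE U).card :=
        Finset.card_pos.mpr ⟨hOne.choose, hOsubF hOne.choose_spec⟩
      obtain ⟨M, hM⟩ : ∃ M, (cliqueE U).card = M + 1 := ⟨(cliqueE U).card - 1, by omega⟩
      have hcard2 : (cliqueE (U \ Z)).card ≤ M := by
        have h1 : (cliqueE U \ O).card = (cliqueE U).card - O.card :=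
          Finset.card_sdiff_of_subset hOsubF
        have h2 : 1 ≤ O.card := Finset.card_pos.mpr hOne
        rw [← hFO, h1]
        omega
      rw [hM]
      simp only [WaiterCanAux, if_neg hUe]
      refine ⟨O, hOsubF, hOne, hOcard, ?_⟩
      intro x hx
      obtain ⟨z, w, rfl, hz, hwU, hzw⟩ := hOmem x hx
      have hzfresh : ¬ ∃ e ∈ D, z ∈ e := (Finset.mem_filter.mp (hZF hz)).2
      have hzU : z ∈ U := hZU hz
      rw [hFO, ← Finset.union_insert]
      refine waiterAux_mono hcard2 (ih (U \ Z) (insert s(z, w) D) ?_ ?_ ?_ ?_ ?_)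
      · -- card bound
        have h1 : (U \ Z).card = U.card - Z.card := Finset.card_sdiff_of_subset hZU
        have h2 : 1 ≤ Z.card := Finset.card_pos.mpr hZne
        omega
      · exact Finset.sdiff_subset.trans hUS
      · exact Finset.insert_subset (cliqueE_mono hUS (hOsubF hx)) hD
      · -- structure invariant
        intro e he
        rcases Finset.mem_insert.mp he with rfl | heD
        · refine ⟨z, Sym2.mem_mk_left z w, fun hmem => (Finset.mem_sdiff.mp hmem).2 hz, ?_⟩
          have hfe : (insert s(z, w) D).filter (fun e' => z ∈ e') = {s(z, w)} := by
            ext e'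
            simp only [Finset.mem_filter, Finset.mem_insert, Finset.mem_singleton]
            constructor
            · rintro ⟨rfl | he'D, hz'⟩
              · rfl
              · exact absurd ⟨e', he'D, hz'⟩ hzfresh
            · rintro rfl
              exact ⟨Or.inl rfl, Sym2.mem_mk_left z w⟩
          rw [hfe, Finset.card_singleton]
        · obtain ⟨v, hv, hvU, hdeg⟩ := hstruct e heD
          refine ⟨v, hv, fun hmem => hvU (Finset.mem_sdiff.mp hmem).1, ?_⟩
          have hvx : ¬ v ∈ s(z, w) := by
            intro hcon
            rcases Sym2.mem_iff.mp hcon with rfl | rfl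
            · exact hvU hzU
            · exact hvU hwU
          rw [Finset.filter_insert, if_neg hvx]
          exact hdeg
      · -- counting invariant
        have hleft : s * (U.filter (fun v => ∃ e ∈ D, v ∈ e)).card + U.card
            ≤ S.card + s := by
          rcases hcount with h | ⟨hc, _⟩
          · exact h
          · exact absurd hc hfresh
        have hsubA : (U \ Z).filter (fun v => ∃ e ∈ insert s(z, w) D, v ∈ e) ⊆
            insert w (U.filter (fun v => ∃ e ∈ D, v ∈ e)) := by
          intro v hv
          have h12 := Finset.mem_filter.mp hv
          have hvUZ := h12.1
          obtain ⟨e', he', hve'⟩ := h12.2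
          rcases Finset.mem_insert.mp he' with rfl | heD
          · rcases Sym2.mem_iff.mp hve' with h | h
            · exact absurd (show v ∈ Z from h.symm ▸ hz) (Finset.mem_sdiff.mp hvUZ).2
            · rw [h]
              exact Finset.mem_insert_self w _
          · exact Finset.mem_insert_of_mem
              (Finset.mem_filter.mpr ⟨(Finset.mem_sdiff.mp hvUZ).1, e', heD, hve'⟩)
        have haU' : ((U \ Z).filter (fun v => ∃ e ∈ insert s(z, w) D, v ∈ e)).card ≤
            (U.filter (fun v => ∃ e ∈ D, v ∈ e)).card + 1 :=
          (Finset.card_le_card hsubA).trans (Finset.card_insert_le _ _)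
        have hUZcard : (U \ Z).card = U.card - Z.card := Finset.card_sdiff_of_subset hZU
        have hmul : s * ((U \ Z).filter (fun v => ∃ e ∈ insert s(z, w) D, v ∈ e)).card ≤
            s * (U.filter (fun v => ∃ e ∈ D, v ∈ e)).card + s := by
          calc s * ((U \ Z).filter (fun v => ∃ e ∈ insert s(z, w) D, v ∈ e)).card
              ≤ s * ((U.filter (fun v => ∃ e ∈ D, v ∈ e)).card + 1) :=
                Nat.mul_le_mul_left s haU'
            _ = s * (U.filter (fun v => ∃ e ∈ D, v ∈ e)).card + s := by ring
        rcases le_or_gt s (U.filter (fun v => ¬ ∃ e ∈ D, v ∈ e)).card with hle | hlt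
        · -- full round
          left
          have hZeq : Z.card = s := by rw [hZcard]; exact min_eq_left hle
          have hsU : s ≤ U.card := hZeq ▸ Finset.card_le_card hZU
          set P1 := s * ((U \ Z).filter (fun v => ∃ e ∈ insert s(z, w) D, v ∈ e)).card
            with hP1
          set P2 := s * (U.filter (fun v => ∃ e ∈ D, v ∈ e)).card with hP2
          omega
        · -- partial round: took all remaining fresh vertices
          right
          have hZeq : Z = U.filter (fun v => ¬ ∃ e ∈ D, v ∈ e) := by
            apply Finset.eq_of_subset_of_card_le hZF
            rw [hZcard]
            exact le_of_eq (min_eq_right hlt.le).symm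
          constructor
          · rw [Finset.eq_empty_iff_forall_notMem]
            intro v hv
            obtain ⟨hvUZ, hfr⟩ := Finset.mem_filter.mp hv
            obtain ⟨hvU, hvZ⟩ := Finset.mem_sdiff.mp hvUZ
            apply hvZ
            rw [hZeq]
            refine Finset.mem_filter.mpr ⟨hvU, ?_⟩
            rintro ⟨e', he', hve'⟩
            exact hfr ⟨e', Finset.mem_insert_of_mem he', hve'⟩
          · set P1 := s * ((U \ Z).filter (fun v => ∃ e ∈ insert s(z, w) D, v ∈ e)).card
              with hP1
            set P2 := s * (U.filter (fun v => ∃ e ∈ D, v ∈ e)).card with hP2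
            omega

end MainPhase

section Level

variable {V : Type*} [DecidableEq V]

theorem np_of_card_lt {D : Finset (Sym2 V)} {L : ℕ} (h : D.card < L) : NP L D :=
  fun _ _ p hp => lt_of_le_of_lt (length_le_card p hp) h

theorem level_trivial {S : Finset V} {q L : ℕ} (hL : 2 ≤ L) (C₀ : Finset (Sym2 V))
    (hcard : (cliqueE S).card ≤ q + 1) :
    WaiterCanAux q (fun C => ∃ D, D ⊆ cliqueE S ∧ C = C₀ ∪ D ∧ NP L D)
      (cliqueE S).card C₀ (cliqueE S) := by
  apply waiterAux_onebatch hcard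
  · exact ⟨∅, Finset.empty_subset _, (Finset.union_empty C₀).symm,
      np_of_card_lt (by simp only [Finset.card_empty]; omega)⟩
  · intro x hx
    exact ⟨{x}, Finset.singleton_subset_iff.mpr hx,
      by rw [Finset.insert_eq, Finset.union_comm],
      np_of_card_lt (by simp only [Finset.card_singleton]; omega)⟩

theorem level : ∀ (k : ℕ) (S : Finset V) (q : ℕ) (C₀ : Finset (Sym2 V)),
    3 * (S.card : ℝ) ^ ((2:ℝ) ^ (k+1) / ((2:ℝ) ^ (k+1) - 1)) ≤ (q : ℝ) →
    WaiterCanAux q (fun C => ∃ D, D ⊆ cliqueE S ∧ C = C₀ ∪ D ∧ NP (2*(k+1)) D)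
      (cliqueE S).card C₀ (cliqueE S) := by
  intro k
  induction k with
  | zero =>
    intro S q C₀ hq
    have hexp : (2:ℝ) ^ (0+1) / ((2:ℝ) ^ (0+1) - 1) = 2 := by norm_num
    rw [hexp] at hq
    have hrpow2 : ((S.card:ℝ)) ^ (2:ℝ) = (S.card:ℝ) * (S.card:ℝ) := by
      rw [show (2:ℝ) = ((2:ℕ):ℝ) by norm_num, Real.rpow_natCast]
      ring
    have hq2 : 3 * ((S.card:ℝ) * (S.card:ℝ)) ≤ q := by rw [← hrpow2]; exact hq
    have hnat : S.card * S.card ≤ q := by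
      have h0 : (0:ℝ) ≤ (S.card:ℝ)*(S.card:ℝ) := mul_self_nonneg _
      have h4 : ((S.card:ℝ)*(S.card:ℝ)) ≤ (q:ℝ) := by linarith only [hq2, h0]
      exact_mod_cast h4
    have h2c := two_mul_card_cliqueE_le S
    have hA : S.card ≤ S.card * S.card := by
      rcases Nat.eq_zero_or_pos S.card with h | h
      · simp [h]
      · exact Nat.le_mul_of_pos_left _ h
    have hcard : (cliqueE S).card ≤ q + 1 := by
      have : S.card * (S.card + 1) = S.card * S.card + S.card := by ring
      omega
    exact level_trivial (by omega) C₀ hcard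
  | succ j ihj =>
    intro S q C₀ hq
    set A : ℝ := (2:ℝ) ^ (j+1+1) with hA
    have hA4 : (4:ℝ) ≤ A := by
      rw [hA]
      calc (4:ℝ) = 2^2 := by norm_num
        _ ≤ 2^(j+1+1) := by
            apply pow_le_pow_right₀ (by norm_num)
            omega
    rcases Nat.eq_zero_or_pos S.card with hσ0 | hσpos
    · have hSe : cliqueE S = ∅ := cliqueE_eq_empty (by omega)
      rw [hSe]
      exact waiterAux_empty ⟨∅, Finset.empty_subset _, (Finset.union_empty C₀).symm,
        np_of_card_lt (by simp only [Finset.card_empty]; omega)⟩ _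
    have hσR : (0:ℝ) < (S.card:ℝ) := by exact_mod_cast hσpos
    have hσ1 : (1:ℝ) ≤ (S.card:ℝ) := by exact_mod_cast hσpos
    set c : ℝ := (A - 2)/(A - 1) with hc
    set α : ℝ := A/(A-1) with hα
    have hqα : 3 * (S.card:ℝ) ^ α ≤ q := hq
    set X : ℝ := (S.card:ℝ) ^ c with hX
    have hc0 : (0:ℝ) ≤ c := div_nonneg (by linarith) (by linarith)
    have hX0 : (0:ℝ) ≤ X := Real.rpow_nonneg (le_of_lt hσR) _
    have hα1 : (1:ℝ) ≤ α := by
      rw [hα, le_div_iff₀ (by linarith)]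
      linarith
    have hac : α + c = 2 := by
      rw [hα, hc, ← add_div, div_eq_iff (by linarith : A - 1 ≠ 0)]
      ring
    have hσα : (0:ℝ) < (S.card:ℝ)^α := Real.rpow_pos_of_pos hσR _
    have hσ2 : ((S.card:ℝ))^(2:ℝ) = (S.card:ℝ)^α * X := by
      rw [hX, ← Real.rpow_add hσR, hac]
    have hrpow2 : ((S.card:ℝ)) ^ (2:ℝ) = (S.card:ℝ) * (S.card:ℝ) := by
      rw [show (2:ℝ) = ((2:ℕ):ℝ) by norm_num, Real.rpow_natCast]
      ring
    have hσσ : (S.card:ℝ) * (S.card:ℝ) = (S.card:ℝ)^α * X := by rw [← hrpow2, hσ2]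
    have hσα_le : (S.card:ℝ) ≤ (S.card:ℝ)^α := by
      calc (S.card:ℝ) = (S.card:ℝ)^(1:ℝ) := (Real.rpow_one _).symm
        _ ≤ _ := Real.rpow_le_rpow_of_exponent_le hσ1 hα1
    by_cases hX4 : X < 4
    · -- trivial single-batch case
      have h2c := two_mul_card_cliqueE_le S
      have hcard : (cliqueE S).card ≤ q + 1 := by
        have e1 : ((2 * (cliqueE S).card : ℕ):ℝ) ≤ ((S.card * (S.card+1) : ℕ):ℝ) := by
          exact_mod_cast h2c
        have e2 : ((S.card * (S.card+1):ℕ):ℝ)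
            = (S.card:ℝ) * (S.card:ℝ) + (S.card:ℝ) := by push_cast; ring
        have e3 : (S.card:ℝ) * (S.card:ℝ) ≤ 4 * (S.card:ℝ)^α := by
          rw [hσσ]
          nlinarith
        have key : ((2 * (cliqueE S).card : ℕ):ℝ) ≤ 2*(q:ℝ) := by
          rw [e2] at e1
          nlinarith
        have : 2 * (cliqueE S).card ≤ 2 * q := by exact_mod_cast key
        omega
      exact level_trivial (by omega) C₀ hcard
    · push_neg at hX4
      have hq3σ : 3 * S.card ≤ q := by
        have h1 : 3*(S.card:ℝ) ≤ (q:ℝ) := by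
          calc 3*(S.card:ℝ) ≤ 3*(S.card:ℝ)^α := by linarith
            _ ≤ q := hqα
        exact_mod_cast h1
      set s : ℕ := (q+1)/S.card with hsdef
      have hs : 0 < s := Nat.div_pos (by omega) hσpos
      have hsq : s * S.card ≤ q + 1 := Nat.div_mul_le_self _ _
      -- lower bound on s : 2(q+1) ≤ 3 σ s
      have hdivN : 2 * (q + 1) ≤ 3 * (S.card * s) := by
        have hmod := Nat.div_add_mod (q+1) S.card
        have hmlt : (q+1) % S.card < S.card := Nat.mod_lt _ hσpos
        rw [← hsdef] at hmod
        set ss := S.card * s with hss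
        omega
      have hdiv : 2 * ((q:ℝ) + 1) ≤ 3 * ((S.card:ℝ) * (s:ℝ)) := by
        have h1 : ((2 * (q+1) : ℕ):ℝ) ≤ ((3 * (S.card * s) : ℕ):ℝ) := by exact_mod_cast hdivN
        push_cast at h1
        linarith only [h1]
      have hsR : (0:ℝ) < (s:ℝ) := by exact_mod_cast hs
      -- the recursion input for main_phase
      have hm : ∀ (U : Finset V) (C₁ : Finset (Sym2 V)), s * U.card ≤ S.card + 2 * s →
          WaiterCanAux q (fun C => ∃ D₂, D₂ ⊆ cliqueE U ∧ C = C₁ ∪ D₂ ∧ NP (2*(j+1)) D₂)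
            (cliqueE U).card C₁ (cliqueE U) := by
        intro U C₁ hcnt
        have hUX : (U.card:ℝ) ≤ X := by
          have h1 : ((s * U.card : ℕ):ℝ) ≤ ((S.card + 2*s : ℕ):ℝ) := by exact_mod_cast hcnt
          push_cast at h1
          -- step 1 : 2σ ≤ s X
          have e1 : 2*((q:ℝ)+1)*X ≤ 3*((S.card:ℝ)*(s:ℝ))*X :=
            mul_le_mul_of_nonneg_right hdiv hX0
          have e2 : 3*((S.card:ℝ))^α*X ≤ (q:ℝ)*X := mul_le_mul_of_nonneg_right hqα hX0
          have e3 : 3*((S.card:ℝ))^α*X = 3*((S.card:ℝ)*(S.card:ℝ)) := by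
            rw [hσσ]; ring
          have hq0 : (0:ℝ) ≤ q := Nat.cast_nonneg q
          have e2' : 3*((S.card:ℝ)*(S.card:ℝ)) ≤ (q:ℝ)*X := by rw [← e3]; exact e2
          have e4 : 6*((S.card:ℝ)*(S.card:ℝ)) ≤ 3*((S.card:ℝ)*(s:ℝ))*X := by
            linarith only [e1, e2', hX0, hq0]
          have e5 : 2*(S.card:ℝ) ≤ (s:ℝ)*X := by
            have h3σ : (0:ℝ) < 3*(S.card:ℝ) := by linarith only [hσR]
            rw [← mul_le_mul_iff_right₀ h3σ]
            calc 3*(S.card:ℝ)*(2*(S.card:ℝ)) = 6*((S.card:ℝ)*(S.card:ℝ)) := by ring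
              _ ≤ 3*((S.card:ℝ)*(s:ℝ))*X := e4
              _ = 3*(S.card:ℝ)*((s:ℝ)*X) := by ring
          have e8 : (0:ℝ) ≤ (s:ℝ)*(X-4) :=
            mul_nonneg (le_of_lt hsR) (by linarith only [hX4])
          -- step 2 : m ≤ X
          have e7 : (s:ℝ)*(U.card:ℝ) ≤ (s:ℝ)*X := by linarith only [h1, e5, e8]
          exact le_of_mul_le_mul_left e7 hsR
        apply ihj
        -- 3 m ^ β ≤ q
        set B : ℝ := (2:ℝ)^(j+1) with hB
        have hB2 : (2:ℝ) ≤ B := by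
          rw [hB]
          calc (2:ℝ) = 2^1 := by norm_num
            _ ≤ 2^(j+1) := by
                apply pow_le_pow_right₀ (by norm_num)
                omega
        have hAB : A = 2*B := by
          rw [hA, hB, pow_succ]
          ring
        have hβ0 : (0:ℝ) ≤ B/(B-1) := div_nonneg (by linarith) (by linarith)
        have hmβ : (U.card:ℝ)^(B/(B-1)) ≤ X^(B/(B-1)) :=
          Real.rpow_le_rpow (Nat.cast_nonneg _) hUX hβ0
        have hXβ : X^(B/(B-1)) = (S.card:ℝ)^α := by
          rw [hX, ← Real.rpow_mul (le_of_lt hσR)]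
          congr 1
          rw [hc, hα, hAB]
          have hB1 : B - 1 ≠ 0 := by intro hcon; linarith only [hB2, hcon]
          have h2B1 : 2*B - 1 ≠ 0 := by intro hcon; linarith only [hB2, hcon]
          field_simp
        calc 3 * (U.card:ℝ)^((2:ℝ)^(j+1)/((2:ℝ)^(j+1)-1))
            = 3 * (U.card:ℝ)^(B/(B-1)) := by rw [hB]
          _ ≤ 3 * X^(B/(B-1)) := by linarith only [hmβ]
          _ = 3 * (S.card:ℝ)^α := by rw [hXβ]
          _ ≤ q := hqα
      -- run the main phase
      have hmain := main_phase q (j+1) (by omega) S C₀ s hs hsq hm S.card S ∅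
        (le_refl _) (Finset.Subset.refl S) (Finset.empty_subset _)
        (by intro e he; exact absurd he (Finset.notMem_empty e))
        (by
          left
          have hfe : S.filter (fun v => ∃ e ∈ (∅ : Finset (Sym2 V)), v ∈ e) = ∅ := by
            apply Finset.filter_false_of_mem
            intro v _
            rintro ⟨e, he, _⟩
            exact absurd he (Finset.notMem_empty e)
          rw [hfe]
          simp only [Finset.card_empty, Nat.mul_zero, Nat.zero_add]
          omega)
      rw [Finset.union_empty] at hmain
      have hnum : 2*(j+1)+2 = 2*(j+1+1) := by ring
      rw [hnum] at hmain
      exact hmain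

end Level

theorem kboard_eq (n : ℕ) : Kboard n = cliqueE (Finset.univ : Finset (Fin n)) := by
  ext e
  induction e with
  | _ a b =>
    simp [Kboard, SimpleGraph.mem_edgeFinset, SimpleGraph.mem_edgeSet, SimpleGraph.top_adj,
      mem_cliqueE, Sym2.mk_isDiag_iff]

/-- Theorem 3(i): if `q ≥ 3 n^{2^k/(2^k-1)}` then `P(n,q) < 2k`: Waiter can ensure that
Client's final graph contains no path with `2k` edges. -/
theorem stmt5 (n k q : ℕ) (hn : 0 < n) (hk : 0 < k) (hq : 0 < q)
    (h : 3 * (n : ℝ) ^ ((2 : ℝ) ^ k / ((2 : ℝ) ^ k - 1)) ≤ (q : ℝ)) :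
    WaiterCanForce (Kboard n) q
      (fun C => ∀ (u v : Fin n) (p : (clientGraph C).Walk u v), p.IsPath →
        p.length < 2 * k) := by
  obtain ⟨j, rfl⟩ : ∃ j, k = j + 1 := ⟨k - 1, by omega⟩
  have hcard : (Finset.univ : Finset (Fin n)).card = n := by simp
  have hlev := level j (Finset.univ : Finset (Fin n)) q ∅ (by rw [hcard]; exact h)
  unfold WaiterCanForce
  rw [kboard_eq]
  refine waiterAux_adapt hlev ?_
  rintro C' ⟨D, hD, hCeq, hNP⟩
  rw [Finset.empty_union] at hCeq
  subst hCeq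
  intro u v p hp
  exact hNP u v p hp
end

section
/- There exists n₀ such that for every integer n ≥ n₀ and every positive integer q with q ≥ n, Waiter has a strategy in the Client-Waiter game with bias q played on the board E(K_n) guaranteeing that Client's final graph contains no path with at least 3·ln ln n edges; in other words, P(n,q) < 3·ln ln n. -/
open Finset

variable {α : Type*}

section WaiterStrategy

section PathBound
open SimpleGraph
variable {V : Type*} {G : SimpleGraph V}

lemma getVert_mem_support' {u v : V} (p : G.Walk u v) (i : ℕ) :
    p.getVert i ∈ p.support := by
  induction p generalizing i with
  | nil => cases i <;> simp [SimpleGraph.Walk.getVert]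
  | cons h q ih =>
    cases i with
    | zero => simp [SimpleGraph.Walk.getVert]
    | succ j =>
      simp only [SimpleGraph.Walk.support_cons, List.mem_cons]
      exact Or.inr (ih j)

lemma getVert_injOn' {u v : V} {p : G.Walk u v} (hp : p.IsPath) :
    ∀ i ≤ p.length, ∀ j ≤ p.length, p.getVert i = p.getVert j → i = j := by
  induction p with
  | nil => intro i hi j hj _; simp at hi hj; omega
  | cons h q ih =>
    rw [SimpleGraph.Walk.cons_isPath_iff] at hp
    intro i hi j hj hij
    cases i with
    | zero =>
      cases j with
      | zero => rfl
      | succ j' =>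
        exfalso
        simp only [SimpleGraph.Walk.getVert] at hij
        exact hp.2 (hij ▸ getVert_mem_support' q j')
    | succ i' =>
      cases j with
      | zero =>
        exfalso
        simp only [SimpleGraph.Walk.getVert] at hij
        exact hp.2 (hij.symm ▸ getVert_mem_support' q i')
      | succ j' =>
        simp only [SimpleGraph.Walk.getVert] at hij
        simp only [SimpleGraph.Walk.length_cons, Nat.succ_le_succ_iff] at hi hj
        exact congrArg Nat.succ (ih hp.1 i' hi j' hj hij)

lemma run_rank_lb (par : V → Option V) (r : V → ℕ)
    (hpar : ∀ v w, par v = some w → Even (r v) ∧ r v < r w)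
    (h : ℕ → V) (k : ℕ) (hrun : ∀ s, s < k → par (h s) = some (h (s + 1))) :
    ∀ s, s < k → 2 * s ≤ r (h s) := by
  intro s
  induction s with
  | zero => intro _; omega
  | succ s' ihs =>
    intro hs
    have h1 := ihs (by omega)
    obtain ⟨⟨c, hc⟩, hlt⟩ := hpar _ _ (hrun s' (by omega))
    obtain ⟨⟨d, hd⟩, -⟩ := hpar _ _ (hrun (s'+1) hs)
    omega

/-- Key structural bound: if edges of `G` are oriented by `par` with strictly increasing
rank `r`, sources having even rank `≤ 2*g`, then every path has length `≤ 2*g+2`. -/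
lemma path_length_bound (par : V → Option V) (r : V → ℕ) (g : ℕ)
    (hpar : ∀ v w, par v = some w → r v ≤ 2 * g ∧ Even (r v) ∧ r v < r w)
    (hadj : ∀ a b : V, G.Adj a b → par a = some b ∨ par b = some a)
    {u v : V} (p : G.Walk u v) (hp : p.IsPath) : p.length ≤ 2 * g + 2 := by
  classical
  by_contra hL
  push_neg at hL
  set L := p.length with hLdef
  have hinj := getVert_injOn' hp
  set f : ℕ → V := fun t => p.getVert t with hf
  have hAdj : ∀ t, t < L → G.Adj (f t) (f (t + 1)) := fun t ht =>
    p.adj_getVert_succ ht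
  have hpar' : ∀ v w, par v = some w → Even (r v) ∧ r v < r w :=
    fun v w h => ⟨(hpar v w h).2.1, (hpar v w h).2.2⟩
  have K2 : ∀ t, t + 1 < L → ¬ (par (f t) = some (f (t+1))) →
      ¬ (par (f (t+1)) = some (f (t+1+1))) := by
    intro t ht hnup hup
    have h1 : par (f (t+1)) = some (f t) := by
      rcases hadj _ _ (hAdj t (by omega)) with h | h
      · exact absurd h hnup
      · exact h
    have heq : f t = f (t+1+1) := Option.some.inj (h1.symm.trans hup)
    have := hinj t (by omega) (t+2) (by omega) heq
    omega
  have hex : ∃ t, t < L ∧ ¬ par (f t) = some (f (t+1)) := by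
    by_contra hcon
    push_neg at hcon
    have h1 := run_rank_lb par r hpar' f L hcon (L - 1) (by omega)
    have h2 := (hpar _ _ (hcon (L-1) (by omega))).1
    omega
  set c := Nat.find hex with hc
  obtain ⟨hcL, hcnup⟩ := Nat.find_spec hex
  have hup : ∀ t, t < c → par (f t) = some (f (t+1)) := by
    intro t ht
    by_contra hcon
    exact absurd ⟨by omega, hcon⟩ (Nat.find_min hex ht)
  -- c ≤ g + 1
  have hcle : c ≤ g + 1 := by
    rcases Nat.eq_zero_or_pos c with h0 | h0
    · omega
    · have h1 := run_rank_lb par r hpar' f c hup (c - 1) (by omega)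
      have h2 := (hpar _ _ (hup (c-1) (by omega))).1
      omega
  -- all backwards from c on
  have hdown : ∀ k, c + k < L → ¬ par (f (c + k)) = some (f (c + k + 1)) := by
    intro k
    induction k with
    | zero => intro _; simpa using hcnup
    | succ k' ihk =>
      intro hk
      have h1 := ihk (by omega)
      have h2 := K2 (c + k') (by omega) h1
      have : c + k' + 1 = c + (k' + 1) := by omega
      rwa [this] at h2
  -- backward run
  have hback : ∀ s, s < L - c → par (f (L - s)) = some (f (L - s - 1)) := by
    intro s hs
    have ht : c + (L - s - 1 - c) = L - s - 1 := by omega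
    have h1 := hdown (L - s - 1 - c) (by omega)
    rw [ht] at h1
    have h2 : L - s - 1 + 1 = L - s := by omega
    rw [h2] at h1
    rcases hadj _ _ (hAdj (L - s - 1) (by omega)) with h | h
    · rw [h2] at h; exact absurd h h1
    · rwa [h2] at h
  have hback' : ∀ s, s < L - c → par ((fun s => f (L - s)) s) = some ((fun s => f (L - s)) (s+1)) := by
    intro s hs
    have : L - (s + 1) = L - s - 1 := by omega
    simpa [this] using hback s hs
  have h1 := run_rank_lb par r hpar' (fun s => f (L - s)) (L - c) hback' (L - c - 1) (by omega)
  have h2 := (hpar _ _ (hback' (L - c - 1) (by omega))).1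
  simp only at h1 h2
  omega

end PathBound


/-- doubly exponential sequence -/
def Fseq : ℕ → ℕ
  | 0 => 1
  | i + 1 => Fseq i * (Fseq i + 1)

lemma Fseq_pos (i : ℕ) : 0 < Fseq i := by
  induction i with
  | zero => simp [Fseq]
  | succ i ih => simp [Fseq]; positivity

lemma Fseq_growth (i : ℕ) : 2 ^ 2 ^ i ≤ Fseq (i + 1) := by
  induction i with
  | zero => simp [Fseq]
  | succ i ih =>
    have h1 : Fseq (i + 2) = Fseq (i+1) * (Fseq (i+1) + 1) := rfl
    have : 2 ^ 2 ^ (i+1) = 2 ^ 2 ^ i * 2 ^ 2 ^ i := by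
      rw [← pow_add, pow_succ]; ring_nf
    rw [h1, this]
    calc 2 ^ 2 ^ i * 2 ^ 2 ^ i ≤ Fseq (i+1) * Fseq (i+1) := Nat.mul_le_mul ih ih
      _ ≤ Fseq (i+1) * (Fseq (i+1) + 1) := by nlinarith [Fseq_pos (i+1)]

/-- bound on phase index -/
def gbd (n : ℕ) : ℕ := Nat.log 2 (Nat.log 2 (n + 1)) + 1

lemma phase_le_gbd {n i : ℕ} (h : Fseq i * 2 ≤ n + 1) : i ≤ gbd n := by
  cases i with
  | zero => simp [gbd]
  | succ j =>
    have h1 : 2 ^ 2 ^ j * 2 ≤ n + 1 := le_trans (Nat.mul_le_mul_right 2 (Fseq_growth j)) h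
    have h2 : 2 ^ (2 ^ j + 1) ≤ n + 1 := by rw [pow_succ]; exact h1
    have h3 : 2 ^ j + 1 ≤ Nat.log 2 (n + 1) :=
      (Nat.le_log_iff_pow_le (by norm_num) (by omega)).mpr h2
    have h4 : 2 ^ j ≤ Nat.log 2 (n + 1) := by omega
    have h5 : j ≤ Nat.log 2 (Nat.log 2 (n + 1)) := by
      have hne : Nat.log 2 (n+1) ≠ 0 := by
        have : (1:ℕ) ≤ 2 ^ j := Nat.one_le_two_pow
        omega
      exact (Nat.le_log_iff_pow_le (by norm_num) hne).mpr h4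
    simpa [gbd] using Nat.succ_le_succ h5

lemma mem_Kboard {n : ℕ} (a b : Fin n) : s(a, b) ∈ Kboard n ↔ a ≠ b := by
  simp [Kboard, SimpleGraph.mem_edgeFinset]

lemma Kboard_subset_sym2 {n : ℕ} : Kboard n ⊆ (univ : Finset (Fin n)).sym2 := by
  intro e _
  rw [Finset.mem_sym2_iff]
  intro y _
  exact mem_univ y

structure InvData (n : ℕ) (C F : Finset (Sym2 (Fin n))) where
  X : Finset (Fin n)
  Y : Finset (Fin n)
  i : ℕ
  M : ℕ
  par : Fin n → Option (Fin n)
  r : Fin n → ℕ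
  hF : F = Kboard n ∩ X.sym2
  hY : Y ⊆ X
  hC : ∀ e, e ∈ C ↔ ∃ v w, par v = some w ∧ e = s(v, w)
  hpar : ∀ v w, par v = some w → r v < r w ∧ Even (r v)
  hlive : ∀ v ∈ X, r v = 2 * i + 2 ∧ par v = none
  helig : ∀ v w, par v = some w → w ∈ X → w ∉ Y → r v < 2 * i
  hdead : ∀ v, v ∉ X → r v ≤ 2 * gbd n + 1
  hpot : (X \ Y).card + (Fseq i + 1) * Y.card ≤ M
  hM : Fseq i * M ≤ n + 1

def inv_init (n : ℕ) : InvData n ∅ (Kboard n) where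
  X := univ
  Y := ∅
  i := 0
  M := n
  par := fun _ => none
  r := fun _ => 2
  hF := (Finset.inter_eq_left.mpr Kboard_subset_sym2).symm
  hY := empty_subset _
  hC := by simp
  hpar := by simp
  hlive := by intro v _; exact ⟨rfl, rfl⟩
  helig := by simp
  hdead := by simp
  hpot := by simp
  hM := by simp [Fseq]

/-- Phase bump: when every live vertex is ineligible, start a new phase. -/
def inv_bump {n : ℕ} {C F : Finset (Sym2 (Fin n))} (D : InvData n C F)
    (hE : D.X \ D.Y = ∅) : InvData n C F where
  X := D.X
  Y := ∅
  i := D.i + 1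
  M := D.X.card
  par := D.par
  r := fun v => if v ∈ D.X then 2 * (D.i + 1) + 2 else D.r v
  hF := D.hF
  hY := empty_subset _
  hC := D.hC
  hpar := by
    intro v w hvw
    have hvnX : v ∉ D.X := by
      intro hv
      have := (D.hlive v hv).2
      rw [this] at hvw; cases hvw
    obtain ⟨hlt, hev⟩ := D.hpar v w hvw
    by_cases hw : w ∈ D.X
    · simp only [if_neg hvnX, if_pos hw]
      have := (D.hlive w hw).1
      exact ⟨by omega, hev⟩
    · simp only [if_neg hvnX, if_neg hw]; exact ⟨hlt, hev⟩
  hlive := by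
    intro v hv
    exact ⟨if_pos hv, (D.hlive v hv).2⟩
  helig := by
    intro v w hvw hw _
    have hvnX : v ∉ D.X := by
      intro hv
      have := (D.hlive v hv).2
      rw [this] at hvw; cases hvw
    simp only [if_neg hvnX]
    have hlt := (D.hpar v w hvw).1
    have := (D.hlive w hw).1
    omega
  hdead := by
    intro v hv
    simp only [if_neg hv]
    exact D.hdead v hv
  hpot := by simp
  hM := by
    have hXY : D.X = D.Y := by
      apply Finset.Subset.antisymm _ D.hY
      intro v hv
      by_contra hvy
      have : v ∈ D.X \ D.Y := Finset.mem_sdiff.mpr ⟨hv, hvy⟩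
      rw [hE] at this; exact absurd this (Finset.notMem_empty v)
    have hpot := D.hpot
    rw [hE] at hpot
    simp only [card_empty, Nat.zero_add] at hpot
    have h1 : Fseq (D.i + 1) = Fseq D.i * (Fseq D.i + 1) := rfl
    calc Fseq (D.i + 1) * D.X.card = Fseq D.i * ((Fseq D.i + 1) * D.Y.card) := by
          rw [h1, hXY]; ring
      _ ≤ Fseq D.i * D.M := Nat.mul_le_mul_left _ hpot
      _ ≤ n + 1 := D.hM

lemma inv_step {n q : ℕ} {C F : Finset (Sym2 (Fin n))} (hq : n ≤ q)
    (D : InvData n C F) (hne : F.Nonempty) (hEne : (D.X \ D.Y).Nonempty) :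
    ∃ O ⊆ F, O.Nonempty ∧ O.card ≤ q + 1 ∧
      ∀ e ∈ O, Nonempty (InvData n (insert e C) (F \ O)) := by
  obtain ⟨X, Y, i, M, par, r, hF, hY, hC, hpar, hlive, helig, hdead, hpot, hM⟩ := D
  simp only at hEne
  -- choose the set S of vertices to flush
  have hSex : ∃ S : Finset (Fin n), S ⊆ X \ Y ∧ S.Nonempty ∧ S.card ≤ Fseq i ∧
      (S = X \ Y ∨ S.card = Fseq i) := by
    by_cases hc : (X \ Y).card ≤ Fseq i
    · exact ⟨X \ Y, Finset.Subset.refl _, hEne, hc, Or.inl rfl⟩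
    · obtain ⟨S, hS1, hS2⟩ := Finset.exists_subset_card_eq (le_of_lt (lt_of_not_ge hc))
      refine ⟨S, hS1, ?_, le_of_eq hS2, Or.inr hS2⟩
      rw [← Finset.card_pos, hS2]
      exact Fseq_pos i
  obtain ⟨S, hSXY, hSne, hScard, hSalt⟩ := hSex
  have hSX : S ⊆ X := hSXY.trans (Finset.sdiff_subset)
  have hYS : ∀ v, v ∈ Y → v ∉ S := fun v hv hvS => (Finset.mem_sdiff.mp (hSXY hvS)).2 hv
  have hYX : ∀ v, v ∈ Y → v ∈ X := fun v hv => hY hv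
  have hdeadpar : ∀ v w, par v = some w → v ∉ X := by
    intro v w hvw hv
    have := (hlive v hv).2
    rw [this] at hvw
    cases hvw
  have hX2 : 1 < X.card := by
    obtain ⟨e, he⟩ := hne
    rw [hF, Finset.mem_inter] at he
    obtain ⟨heK, heX⟩ := he
    revert heK heX
    refine Sym2.ind (fun a b => ?_) e
    intro hK hXab
    rw [mem_Kboard] at hK
    rw [Finset.mk_mem_sym2_iff] at hXab
    exact Finset.one_lt_card.mpr ⟨a, hXab.1, b, hXab.2, hK⟩
  have hXM : X.card ≤ M := by
    have h1 : (X \ Y).card + Y.card = X.card := Finset.card_sdiff_add_card_eq_card hY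
    have h2 : Y.card ≤ (Fseq i + 1) * Y.card := Nat.le_mul_of_pos_left _ (by positivity)
    omega
  have hiG : i ≤ gbd n := by
    apply phase_le_gbd
    calc Fseq i * 2 ≤ Fseq i * M := Nat.mul_le_mul_left _ (by omega)
      _ ≤ n + 1 := hM
  set O := F \ (X \ S).sym2 with hO
  have hrep : ∀ e ∈ O, ∃ a b : Fin n, a ≠ b ∧ a ∈ S ∧ b ∈ X ∧ e = s(a, b) := by
    intro e heO
    have heF : e ∈ F := (Finset.mem_sdiff.mp heO).1
    have heNS : e ∉ (X \ S).sym2 := (Finset.mem_sdiff.mp heO).2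
    rw [hF, Finset.mem_inter] at heF
    obtain ⟨heK, heX⟩ := heF
    revert heK heX heNS
    refine Sym2.ind (fun a b => ?_) e
    intro hNS hK hXab
    rw [mem_Kboard] at hK
    rw [Finset.mk_mem_sym2_iff] at hXab
    have : a ∈ S ∨ b ∈ S := by
      by_contra hcon
      push_neg at hcon
      exact hNS (Finset.mk_mem_sym2_iff.mpr
        ⟨Finset.mem_sdiff.mpr ⟨hXab.1, hcon.1⟩, Finset.mem_sdiff.mpr ⟨hXab.2, hcon.2⟩⟩)
    rcases this with h | h
    · exact ⟨a, b, hK, h, hXab.2, rfl⟩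
    · exact ⟨b, a, Ne.symm hK, h, hXab.1, Sym2.eq_swap.symm⟩
  refine ⟨O, Finset.sdiff_subset, ?_, ?_, ?_⟩
  · -- nonempty
    obtain ⟨a, haS⟩ := hSne
    obtain ⟨b, hbX, hba⟩ := Finset.exists_mem_ne hX2 a
    refine ⟨s(a, b), ?_⟩
    rw [hO, Finset.mem_sdiff]
    constructor
    · rw [hF, Finset.mem_inter]
      exact ⟨(mem_Kboard a b).mpr (Ne.symm hba),
        Finset.mk_mem_sym2_iff.mpr ⟨hSX haS, hbX⟩⟩
    · intro hcon
      exact (Finset.mem_sdiff.mp (Finset.mk_mem_sym2_iff.mp hcon).1).2 haS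
  · -- card bound
    have hsub : O ⊆ (S ×ˢ X).image (fun p => s(p.1, p.2)) := by
      intro e heO
      obtain ⟨a, b, _, haS, hbX, rfl⟩ := hrep e heO
      exact Finset.mem_image.mpr ⟨(a, b), Finset.mem_product.mpr ⟨haS, hbX⟩, rfl⟩
    calc O.card ≤ _ := Finset.card_le_card hsub
      _ ≤ (S ×ˢ X).card := Finset.card_image_le
      _ = S.card * X.card := Finset.card_product _ _
      _ ≤ Fseq i * M := Nat.mul_le_mul hScard hXM
      _ ≤ n + 1 := hM
      _ ≤ q + 1 := by omega
  · -- the invariant is maintained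
    intro e heO
    obtain ⟨a, b, hab, haS, hbX, rfl⟩ := hrep e heO
    have haX : a ∈ X := hSX haS
    refine ⟨{ X := X \ S, Y := (Y ∪ {b}) ∩ (X \ S), i := i, M := M,
              par := Function.update par a (some b),
              r := fun v => if v ∈ S then (if v = b then 2*i+1 else 2*i) else r v,
              hF := ?_, hY := ?_, hC := ?_, hpar := ?_, hlive := ?_,
              helig := ?_, hdead := ?_, hpot := ?_, hM := hM }⟩
    · -- hF
      rw [hO, Finset.sdiff_sdiff_self_left, hF, Finset.inter_assoc,
        Finset.inter_eq_right.mpr (Finset.sym2_mono Finset.sdiff_subset)]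
    · -- hY
      exact Finset.inter_subset_right
    · -- hC
      intro e'
      rw [Finset.mem_insert, hC e']
      constructor
      · rintro (rfl | ⟨v, w, hvw, rfl⟩)
        · exact ⟨a, b, Function.update_self a (some b) par, rfl⟩
        · have hva : v ≠ a := fun h => hdeadpar v w hvw (h ▸ haX)
          exact ⟨v, w, by rw [Function.update_of_ne hva]; exact hvw, rfl⟩
      · rintro ⟨v, w, hvw, rfl⟩
        by_cases hva : v = a
        · subst hva
          rw [Function.update_self] at hvw
          obtain rfl := Option.some.inj hvw
          exact Or.inl rfl
        · rw [Function.update_of_ne hva] at hvw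
          exact Or.inr ⟨v, w, hvw, rfl⟩
    · -- hpar
      intro v w hvw
      by_cases hva : v = a
      · subst hva
        rw [Function.update_self] at hvw
        obtain rfl := Option.some.inj hvw
        have hra : (if v ∈ S then (if v = b then 2*i+1 else 2*i) else r v) = 2*i := by
          rw [if_pos haS, if_neg hab]
        have hrb : (if b ∈ S then (if b = b then 2*i+1 else 2*i) else r b)
            = (if b ∈ S then 2*i+1 else 2*i+2) := by
          by_cases hbS : b ∈ S
          · rw [if_pos hbS, if_pos hbS, if_pos rfl]
          · rw [if_neg hbS, if_neg hbS]
            exact (hlive b hbX).1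
        simp only [hra, hrb]
        constructor
        · split_ifs
          · omega
          · have := (hlive b hbX).1
            omega
        · exact ⟨i, by ring⟩
      · rw [Function.update_of_ne hva] at hvw
        have hvX : v ∉ X := hdeadpar v w hvw
        have hvS : v ∉ S := fun h => hvX (hSX h)
        simp only [if_neg hvS]
        obtain ⟨hlt, hev⟩ := hpar v w hvw
        by_cases hwS : w ∈ S
        · have hwE := hSXY hwS
          have h2 := helig v w hvw (Finset.mem_sdiff.mp hwE).1 (Finset.mem_sdiff.mp hwE).2
          simp only [if_pos hwS]
          refine ⟨?_, hev⟩
          by_cases hwb : w = b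
          · simp only [if_pos hwb]; omega
          · simp only [if_neg hwb]; omega
        · simp only [if_neg hwS]
          exact ⟨hlt, hev⟩
    · -- hlive
      intro v hv
      have hvX := (Finset.mem_sdiff.mp hv).1
      have hvS := (Finset.mem_sdiff.mp hv).2
      have hva : v ≠ a := fun h => hvS (h ▸ haS)
      constructor
      · simp only [if_neg hvS]
        exact (hlive v hvX).1
      · rw [Function.update_of_ne hva]
        exact (hlive v hvX).2
    · -- helig
      intro v w hvw hwX' hwY'
      have hwb : w ≠ b := by
        rintro rfl
        exact hwY' (Finset.mem_inter.mpr
          ⟨Finset.mem_union_right _ (Finset.mem_singleton_self w), hwX'⟩)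
      by_cases hva : v = a
      · subst hva
        rw [Function.update_self] at hvw
        exact absurd (Option.some.inj hvw).symm hwb
      · rw [Function.update_of_ne hva] at hvw
        have hwX := (Finset.mem_sdiff.mp hwX').1
        have hwY : w ∉ Y := fun h => hwY' (Finset.mem_inter.mpr ⟨Finset.mem_union_left _ h, hwX'⟩)
        have h2 := helig v w hvw hwX hwY
        have hvS : v ∉ S := fun h => (hdeadpar v w hvw) (hSX h)
        simp only [if_neg hvS]
        exact h2
    · -- hdead
      intro v hv
      by_cases hvS : v ∈ S
      · simp only [if_pos hvS]
        split_ifs <;> omega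
      · simp only [if_neg hvS]
        have hvX : v ∉ X := fun hvX => hv (Finset.mem_sdiff.mpr ⟨hvX, hvS⟩)
        exact hdead v hvX
    · -- hpot
      have hXY'1 : (X \ S) \ ((Y ∪ {b}) ∩ (X \ S)) = ((X \ Y) \ S) \ {b} := by
        ext v
        simp only [Finset.mem_sdiff, Finset.mem_inter, Finset.mem_union, Finset.mem_singleton]
        tauto
      have h2 : ((X \ Y) \ S).card + S.card = (X \ Y).card :=
        Finset.card_sdiff_add_card_eq_card hSXY
      have hS1 : 1 ≤ S.card := Finset.card_pos.mpr hSne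
      rw [hXY'1]
      by_cases hbS : b ∈ S
      · have hYeq : (Y ∪ {b}) ∩ (X \ S) = Y := by
          ext v
          simp only [Finset.mem_inter, Finset.mem_union, Finset.mem_singleton, Finset.mem_sdiff]
          constructor
          · rintro ⟨hv1 | rfl, _, hvS⟩
            · exact hv1
            · exact absurd hbS hvS
          · intro hv
            exact ⟨Or.inl hv, hYX v hv, hYS v hv⟩
        have hbnot : b ∉ (X \ Y) \ S := fun h => (Finset.mem_sdiff.mp h).2 hbS
        rw [hYeq, Finset.sdiff_eq_self_of_disjoint (Finset.disjoint_singleton_right.mpr hbnot)]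
        omega
      · by_cases hbY : b ∈ Y
        · have hYeq : (Y ∪ {b}) ∩ (X \ S) = Y := by
            ext v
            simp only [Finset.mem_inter, Finset.mem_union, Finset.mem_singleton, Finset.mem_sdiff]
            constructor
            · rintro ⟨hv1 | rfl, _, _⟩
              · exact hv1
              · exact hbY
            · intro hv
              exact ⟨Or.inl hv, hYX v hv, hYS v hv⟩
          have hbnot : b ∉ (X \ Y) \ S := fun h => (Finset.mem_sdiff.mp (Finset.mem_sdiff.mp h).1).2 hbY
          rw [hYeq, Finset.sdiff_eq_self_of_disjoint (Finset.disjoint_singleton_right.mpr hbnot)]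
          omega
        · -- b is a fresh eligible vertex; then S has full size Fseq i
          have hSfull : S.card = Fseq i := by
            rcases hSalt with h | h
            · exfalso
              exact hbS (h ▸ Finset.mem_sdiff.mpr ⟨hbX, hbY⟩)
            · exact h
          have hYeq : (Y ∪ {b}) ∩ (X \ S) = insert b Y := by
            ext v
            simp only [Finset.mem_inter, Finset.mem_union, Finset.mem_singleton,
              Finset.mem_sdiff, Finset.mem_insert]
            constructor
            · rintro ⟨hv1 | rfl, _, _⟩
              · exact Or.inr hv1
              · exact Or.inl rfl
            · rintro (rfl | hv)
              · exact ⟨Or.inr rfl, hbX, hbS⟩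
              · exact ⟨Or.inl hv, hYX v hv, hYS v hv⟩
          have hbmem : b ∈ (X \ Y) \ S :=
            Finset.mem_sdiff.mpr ⟨Finset.mem_sdiff.mpr ⟨hbX, hbY⟩, hbS⟩
          have h3 : (((X \ Y) \ S) \ {b}).card = ((X \ Y) \ S).card - 1 := by
            rw [← Finset.erase_eq, Finset.card_erase_of_mem hbmem]
          have hb1 : 1 ≤ ((X \ Y) \ S).card := Finset.card_pos.mpr ⟨b, hbmem⟩
          have hcardY' : (insert b Y).card = Y.card + 1 := Finset.card_insert_of_notMem hbY
          have hmul : (Fseq i + 1) * (Y.card + 1) = (Fseq i + 1) * Y.card + Fseq i + 1 := by ring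
          rw [hYeq, h3, hcardY', hmul]
          omega

lemma inv_final {n : ℕ} {C F : Finset (Sym2 (Fin n))} (D : InvData n C F)
    {u v : Fin n} (p : (clientGraph C).Walk u v) (hp : p.IsPath) :
    p.length ≤ 2 * gbd n + 2 := by
  apply path_length_bound D.par D.r (gbd n) ?_ ?_ p hp
  · intro v w hvw
    have hvX : v ∉ D.X := by
      intro hv
      have := (D.hlive v hv).2
      rw [this] at hvw
      cases hvw
    obtain ⟨hlt, hev⟩ := D.hpar v w hvw
    have hd := D.hdead v hvX
    obtain ⟨c, hc⟩ := hev
    exact ⟨by omega, ⟨c, hc⟩, hlt⟩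
  · intro x y hxy
    rw [clientGraph, SimpleGraph.fromEdgeSet_adj] at hxy
    obtain ⟨hmem, hne⟩ := hxy
    rw [Finset.mem_coe] at hmem
    obtain ⟨v, w, hvw, heq⟩ := (D.hC _).mp hmem
    rcases Sym2.eq_iff.mp heq with ⟨rfl, rfl⟩ | ⟨rfl, rfl⟩
    · exact Or.inl hvw
    · exact Or.inr hvw

lemma X_nonempty_of_F {n : ℕ} {C F : Finset (Sym2 (Fin n))} (D : InvData n C F)
    (hne : F.Nonempty) : D.X.Nonempty := by
  obtain ⟨e, he⟩ := hne
  rw [D.hF, Finset.mem_inter] at he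
  have heX := he.2
  revert heX
  refine Sym2.ind (fun a b => ?_) e
  intro h
  exact ⟨a, (Finset.mk_mem_sym2_iff.mp h).1⟩

lemma waiter_main {n q : ℕ} (hq : n ≤ q)
    (hreal : (2 * (gbd n : ℝ) + 2) < 3 * Real.log (Real.log n)) :
    ∀ fuel (C F : Finset (Sym2 (Fin n))), F.card ≤ fuel → InvData n C F →
    WaiterCanAux q (fun C => ∀ (u v : Fin n) (p : (clientGraph C).Walk u v), p.IsPath →
      (p.length : ℝ) < 3 * Real.log (Real.log n)) fuel C F := by
  intro fuel
  induction fuel with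
  | zero =>
    intro C F hcard D
    have hF : F = ∅ := Finset.card_eq_zero.mp (Nat.le_zero.mp hcard)
    refine ⟨hF, ?_⟩
    intro u v p hp
    have h1 := inv_final D p hp
    calc (p.length : ℝ) ≤ ((2 * gbd n + 2 : ℕ) : ℝ) := by exact_mod_cast h1
      _ < 3 * Real.log (Real.log n) := by push_cast; linarith
  | succ fuel ih =>
    intro C F hcard D
    show if F = ∅ then _ else _
    by_cases hF : F = ∅
    · rw [if_pos hF]
      intro u v p hp
      have h1 := inv_final D p hp
      calc (p.length : ℝ) ≤ ((2 * gbd n + 2 : ℕ) : ℝ) := by exact_mod_cast h1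
        _ < 3 * Real.log (Real.log n) := by push_cast; linarith
    · rw [if_neg hF]
      have hFne : F.Nonempty := Finset.nonempty_iff_ne_empty.mpr hF
      -- get an invariant state with a nonempty eligible set
      have hD' : ∃ D' : InvData n C F, (D'.X \ D'.Y).Nonempty := by
        rcases (D.X \ D.Y).eq_empty_or_nonempty with h | h
        · refine ⟨inv_bump D h, ?_⟩
          show ((inv_bump D h).X \ (inv_bump D h).Y).Nonempty
          have : (inv_bump D h).X = D.X := rfl
          have h2 : (inv_bump D h).Y = ∅ := rfl
          rw [this, h2, Finset.sdiff_empty]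
          exact X_nonempty_of_F D hFne
        · exact ⟨D, h⟩
      obtain ⟨D', hD'ne⟩ := hD'
      obtain ⟨O, hOF, hOne, hOcard, hOstep⟩ := inv_step hq D' hFne hD'ne
      refine ⟨O, hOF, hOne, hOcard, ?_⟩
      intro e heO
      obtain ⟨D''⟩ := hOstep e heO
      apply ih
      · have h1 : (F \ O).card = F.card - O.card := Finset.card_sdiff_of_subset hOF
        have h2 : 1 ≤ O.card := Finset.card_pos.mpr hOne
        have h3 : O.card ≤ F.card := Finset.card_le_card hOF
        omega
      · exact D''

lemma analytic_bound : ∃ n₀ : ℕ, ∀ n : ℕ, n₀ ≤ n →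
    (2 * (gbd n : ℝ) + 2) < 3 * Real.log (Real.log n) := by
  have htend : Filter.Tendsto (fun n : ℕ => Real.log (Real.log n)) Filter.atTop Filter.atTop :=
    (Real.tendsto_log_atTop.comp Real.tendsto_log_atTop).comp tendsto_natCast_atTop_atTop
  have hev := htend.eventually_ge_atTop 100
  rw [Filter.eventually_atTop] at hev
  obtain ⟨n₁, hn₁⟩ := hev
  refine ⟨max n₁ 16, ?_⟩
  intro n hn
  have hn16 : (16 : ℕ) ≤ n := le_trans (le_max_right _ _) hn
  have ht : (100 : ℝ) ≤ Real.log (Real.log n) := hn₁ n (le_trans (le_max_left _ _) hn)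
  set t := Real.log (Real.log n) with htdef
  have hl2a : (0.6931 : ℝ) < Real.log 2 := by
    have := Real.log_two_gt_d9; linarith
  have hl2b : Real.log 2 < 0.6932 := by
    have := Real.log_two_lt_d9; linarith
  set A := Nat.log 2 (n + 1) with hA
  have hA0 : A ≠ 0 := by
    have h1 : (1 : ℕ) ≤ Nat.log 2 (n + 1) :=
      (Nat.le_log_iff_pow_le (by norm_num) (by omega)).mpr (by omega)
    omega
  have hApos : (0 : ℝ) < (A : ℝ) := by
    have := Nat.pos_of_ne_zero hA0
    exact_mod_cast this
  have hncast : (16 : ℝ) ≤ (n : ℝ) := by exact_mod_cast hn16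
  have hlogn : (0 : ℝ) < Real.log n := Real.log_pos (by linarith)
  have f1 : (Nat.log 2 A : ℝ) * Real.log 2 ≤ Real.log A := by
    have h1 : 2 ^ Nat.log 2 A ≤ A := Nat.pow_log_le_self 2 hA0
    have h2 : ((2 : ℝ)) ^ (Nat.log 2 A) ≤ (A : ℝ) := by exact_mod_cast h1
    have h3 := Real.log_le_log (by positivity) h2
    rwa [Real.log_pow] at h3
  have f2 : (A : ℝ) * Real.log 2 ≤ Real.log (n + 1) := by
    have h1 : 2 ^ A ≤ n + 1 := Nat.pow_log_le_self 2 (by omega)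
    have h2 : ((2 : ℝ)) ^ A ≤ ((n : ℝ) + 1) := by exact_mod_cast h1
    have h3 := Real.log_le_log (by positivity) h2
    rwa [Real.log_pow] at h3
  have f3 : Real.log ((n : ℝ) + 1) ≤ 2 * Real.log n := by
    have h1 : ((n : ℝ) + 1) ≤ (n : ℝ) * (n : ℝ) := by nlinarith
    have h2 := Real.log_le_log (by positivity) h1
    rwa [Real.log_mul (by linarith) (by linarith), ← two_mul] at h2
  have f4 : (A : ℝ) ≤ 2 * Real.log n / Real.log 2 := by
    rw [le_div_iff₀ (by linarith)]
    linarith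
  have f5 : Real.log A ≤ Real.log (2 * Real.log n / Real.log 2) :=
    Real.log_le_log hApos f4
  have f6 : Real.log (2 * Real.log n / Real.log 2) = Real.log 2 + t - Real.log (Real.log 2) := by
    rw [Real.log_div (by positivity) (by linarith), Real.log_mul (by norm_num) (ne_of_gt hlogn)]
  have f7 : -(0.443 : ℝ) ≤ Real.log (Real.log 2) := by
    have h1 : Real.log (Real.log 2)⁻¹ ≤ (Real.log 2)⁻¹ - 1 :=
      Real.log_le_sub_one_of_pos (by positivity)
    rw [Real.log_inv] at h1
    have h2 : (Real.log 2)⁻¹ ≤ 1.443 := by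
      rw [inv_le_comm₀ (by linarith) (by norm_num)]
      nlinarith
    linarith
  have key : (Nat.log 2 A : ℝ) * Real.log 2 ≤ Real.log 2 + t + 0.443 := by
    have := f5
    rw [f6] at this
    linarith
  have hgbd : (gbd n : ℝ) = (Nat.log 2 A : ℝ) + 1 := by
    rw [gbd, hA]
    push_cast
    ring
  rw [hgbd]
  set x := (Nat.log 2 A : ℝ) with hx
  have hx0 : (0 : ℝ) ≤ x := Nat.cast_nonneg _
  by_contra hcon
  push_neg at hcon
  -- hcon : 3 * t ≤ 2 * (x + 1) + 2
  have m1 : (3 * t - 4) * Real.log 2 ≤ (2 * x) * Real.log 2 := by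
    apply mul_le_mul_of_nonneg_right _ (by linarith)
    linarith
  have m2 : 3 * t * 0.6931 ≤ 3 * t * Real.log 2 := by
    apply mul_le_mul_of_nonneg_left (le_of_lt hl2a) (by linarith)
  nlinarith [key, ht, hl2a, hl2b, m1, m2]

end WaiterStrategy

/-- Theorem 3(ii): for `n` large enough, if `q ≥ n` then `P(n,q) < 3 ln ln n`: Waiter can
ensure that Client's final graph contains no path with at least `3 ln ln n` edges. -/
theorem stmt6 :
    ∃ n₀ : ℕ, ∀ n : ℕ, n₀ ≤ n → ∀ q : ℕ, 0 < q → n ≤ q →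
      WaiterCanForce (Kboard n) q
        (fun C => ∀ (u v : Fin n) (p : (clientGraph C).Walk u v), p.IsPath →
          (p.length : ℝ) < 3 * Real.log (Real.log n)) := by
  obtain ⟨n₀, hn₀⟩ := analytic_bound
  refine ⟨n₀, ?_⟩
  intro n hn q hq0 hqn
  exact waiter_main hqn (hn₀ n hn) (Kboard n).card ∅ (Kboard n) le_rfl (inv_init n)
end

section
/- There exists ε₀ > 0 such that for every 0 < ε < ε₀ there exists n₀ such that for every integer n > n₀ and every positive integer q with q ≤ ε·n, Client has a strategy in the Client-Waiter game with bias q played on the board E(K_n) guaranteeing that at the end of the game his graph contains a path with at least (1 − 4ε·ln(1/ε))·n edges; in other words, P(n,q) ≥ (1 − 4ε·ln(1/ε))·n. -/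
open Finset

variable {α : Type*}

section CWAux
variable {α' : Type*} [DecidableEq α']

lemma key_ineq {q o j : ℕ} (hoq : o ≤ q + 1) :
    (o : ℝ) - j ≤ (o : ℝ) * ((q : ℝ) / (q + 1)) ^ j := by
  have hq1 : (0:ℝ) < (q:ℝ) + 1 := by positivity
  have hmu : ((q : ℝ) / (q + 1)) = 1 + (-(1 / ((q:ℝ) + 1))) := by field_simp; ring
  have hb : (1 : ℝ) + (j:ℝ) * (-(1 / ((q:ℝ) + 1))) ≤ (1 + (-(1 / ((q:ℝ) + 1)))) ^ j := by
    apply one_add_mul_le_pow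
    rw [neg_le, neg_neg]
    calc (1:ℝ) / ((q:ℝ)+1) ≤ 1 := by rw [div_le_one hq1]; linarith
      _ ≤ 2 := by norm_num
  rw [hmu]
  have h2 : (o:ℝ) * (1 + (j:ℝ) * (-(1 / ((q:ℝ) + 1)))) ≤ (o:ℝ) * (1 + (-(1 / ((q:ℝ) + 1)))) ^ j :=
    mul_le_mul_of_nonneg_left hb (Nat.cast_nonneg o)
  refine le_trans ?_ h2
  have hoq' : (o : ℝ) ≤ (q:ℝ) + 1 := by exact_mod_cast hoq
  have hj : (0:ℝ) ≤ (j:ℝ) := Nat.cast_nonneg j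
  have hle : (o:ℝ) * (j:ℝ) / ((q:ℝ)+1) ≤ (j:ℝ) := by
    rw [div_le_iff₀ hq1]
    calc (o:ℝ) * (j:ℝ) ≤ ((q:ℝ)+1) * (j:ℝ) := mul_le_mul_of_nonneg_right hoq' hj
      _ = (j:ℝ) * ((q:ℝ)+1) := by ring
  have expand : (o:ℝ) * (1 + (j:ℝ) * (-(1 / ((q:ℝ) + 1)))) = (o:ℝ) - (o:ℝ) * (j:ℝ) / ((q:ℝ)+1) := by
    field_simp; ring
  rw [expand]; linarith

lemma per_index (q : ℕ) (C F O : Finset α') (hOF : O ⊆ F) (hOq : O.card ≤ q + 1)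
    (B : Finset α') :
    ∑ x ∈ O, (if B ∩ insert x C = ∅ then ((q : ℝ) / (q + 1)) ^ (B ∩ (F \ O)).card else 0)
      ≤ (O.card : ℝ) * (if B ∩ C = ∅ then ((q : ℝ) / (q + 1)) ^ (B ∩ F).card else 0) := by
  set μ : ℝ := (q : ℝ) / (q + 1) with hμ
  have hμ0 : (0:ℝ) ≤ μ := by positivity
  by_cases hBC : B ∩ C = ∅
  · have hcond : ∀ x, B ∩ insert x C = ∅ ↔ x ∉ B := by
      intro x
      constructor
      · intro h hx
        have : x ∈ B ∩ insert x C := Finset.mem_inter.2 ⟨hx, Finset.mem_insert_self x C⟩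
        simp [h] at this
      · intro hx
        rw [Finset.eq_empty_iff_forall_notMem]
        intro y hy
        rcases Finset.mem_inter.1 hy with ⟨hyB, hyC⟩
        rcases Finset.mem_insert.1 hyC with rfl | hyC
        · exact hx hyB
        · exact Finset.eq_empty_iff_forall_notMem.1 hBC y (Finset.mem_inter.2 ⟨hyB, hyC⟩)
    have hcards : (B ∩ F).card = (B ∩ (F \ O)).card + (B ∩ O).card := by
      have h1 : B ∩ (F \ O) = (B ∩ F) \ (B ∩ O) := by
        ext y; simp only [Finset.mem_inter, Finset.mem_sdiff]; tauto
      have h2 : B ∩ O ⊆ B ∩ F := Finset.inter_subset_inter (le_refl B) hOF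
      rw [h1, Finset.card_sdiff_of_subset h2]
      have := Finset.card_le_card h2
      omega
    have hjo : (B ∩ O).card ≤ O.card := Finset.card_le_card (Finset.inter_subset_right)
    have hsum : ∑ x ∈ O, (if B ∩ insert x C = ∅ then μ ^ (B ∩ (F \ O)).card else 0)
        = ((O.card : ℝ) - ((B ∩ O).card : ℝ)) * μ ^ (B ∩ (F \ O)).card := by
      simp_rw [hcond]
      rw [Finset.sum_ite, Finset.sum_const_zero, Finset.sum_const, add_zero]
      have hfc : (O.filter (fun x => x ∉ B)).card = O.card - (B ∩ O).card := by
        have := Finset.card_filter_add_card_filter_not (s := O) (p := fun x => x ∈ B)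
        have hfe : O.filter (fun x => x ∈ B) = B ∩ O := by
          rw [Finset.filter_mem_eq_inter, Finset.inter_comm]
        rw [hfe] at this
        omega
      rw [hfc, nsmul_eq_mul, Nat.cast_sub hjo]
    rw [hsum, if_pos hBC, hcards, pow_add]
    have hk := key_ineq (q := q) (o := O.card) (j := (B ∩ O).card) hOq
    calc ((O.card : ℝ) - ((B ∩ O).card : ℝ)) * μ ^ (B ∩ (F \ O)).card
        ≤ ((O.card : ℝ) * μ ^ (B ∩ O).card) * μ ^ (B ∩ (F \ O)).card :=
          mul_le_mul_of_nonneg_right hk (pow_nonneg hμ0 _)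
      _ = (O.card : ℝ) * (μ ^ (B ∩ (F \ O)).card * μ ^ (B ∩ O).card) := by ring
  · have hz : ∀ x ∈ O, (if B ∩ insert x C = ∅ then μ ^ (B ∩ (F \ O)).card else 0) = 0 := by
      intro x _
      have hne : (B ∩ C).Nonempty := Finset.nonempty_iff_ne_empty.2 hBC
      have : B ∩ insert x C ≠ ∅ := by
        rcases hne with ⟨y, hy⟩
        intro hcontra
        have : y ∈ B ∩ insert x C := by
          rcases Finset.mem_inter.1 hy with ⟨h1, h2⟩
          exact Finset.mem_inter.2 ⟨h1, Finset.mem_insert_of_mem h2⟩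
        simp [hcontra] at this
      simp [this, hBC]
    rw [Finset.sum_eq_zero hz]
    simp [hBC]

variable {I : Type*}

noncomputable def pot (q : ℕ) (ι : Finset I) (Bf : I → Finset α') (C F : Finset α') : ℝ :=
  ∑ i ∈ ι, (if Bf i ∩ C = ∅ then ((q : ℝ) / (q + 1)) ^ (Bf i ∩ F).card else 0)

lemma pot_step (q : ℕ) (ι : Finset I) (Bf : I → Finset α') (C F O : Finset α')
    (hOF : O ⊆ F) (hO : O.Nonempty) (hOq : O.card ≤ q + 1) :
    ∃ x ∈ O, pot q ι Bf (insert x C) (F \ O) ≤ pot q ι Bf C F := by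
  apply Finset.exists_le_of_sum_le hO
  calc ∑ x ∈ O, pot q ι Bf (insert x C) (F \ O)
      = ∑ i ∈ ι, ∑ x ∈ O,
          (if Bf i ∩ insert x C = ∅ then ((q : ℝ) / (q + 1)) ^ (Bf i ∩ (F \ O)).card else 0) := by
        rw [Finset.sum_comm]; rfl
    _ ≤ ∑ i ∈ ι, (O.card : ℝ) *
          (if Bf i ∩ C = ∅ then ((q : ℝ) / (q + 1)) ^ (Bf i ∩ F).card else 0) := by
        apply Finset.sum_le_sum
        intro i _
        exact per_index q C F O hOF hOq (Bf i)
    _ = ∑ _x ∈ O, pot q ι Bf C F := by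
        rw [← Finset.mul_sum, Finset.sum_const, nsmul_eq_mul, pot]

lemma pot_final (q : ℕ) (ι : Finset I) (Bf : I → Finset α') (C : Finset α')
    (hlt : pot q ι Bf C ∅ < 1) : ∀ i ∈ ι, (Bf i ∩ C).Nonempty := by
  intro i hi
  rw [Finset.nonempty_iff_ne_empty]
  intro hBC
  have hterm : (1:ℝ) ≤ pot q ι Bf C ∅ := by
    have h1 : (if Bf i ∩ C = ∅ then ((q : ℝ) / (q + 1)) ^ (Bf i ∩ ∅).card else 0) = 1 := by
      rw [if_pos hBC, Finset.inter_empty, Finset.card_empty, pow_zero]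
    calc (1:ℝ) = _ := h1.symm
      _ ≤ pot q ι Bf C ∅ := by
          apply Finset.single_le_sum (f := fun i =>
            (if Bf i ∩ C = ∅ then ((q : ℝ) / (q + 1)) ^ (Bf i ∩ (∅:Finset α')).card else 0)) _ hi
          intro j _
          split <;> positivity
  linarith

lemma client_can_hit (q : ℕ) (ι : Finset I) (Bf : I → Finset α') :
    ∀ (fuel : ℕ) (C F : Finset α'), F.card ≤ fuel → pot q ι Bf C F < 1 →
      ClientCanAux q (fun C => ∀ i ∈ ι, (Bf i ∩ C).Nonempty) fuel C F := by
  intro fuel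
  induction fuel with
  | zero =>
    intro C F hcard hpot
    have hF : F = ∅ := Finset.card_eq_zero.1 (Nat.le_zero.1 hcard)
    subst hF
    exact ⟨rfl, pot_final q ι Bf C hpot⟩
  | succ fuel ih =>
    intro C F hcard hpot
    rw [ClientCanAux]
    split
    · next hF => subst hF; exact pot_final q ι Bf C hpot
    · next hF =>
      intro O hOF hO hOq
      obtain ⟨x, hxO, hx⟩ := pot_step q ι Bf C F O hOF hO hOq
      refine ⟨x, hxO, ih _ _ ?_ (lt_of_le_of_lt hx hpot)⟩
      have h1 : (F \ O).card = F.card - O.card := Finset.card_sdiff_of_subset hOF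
      have h2 : 1 ≤ O.card := Finset.card_pos.2 hO
      have h3 : O.card ≤ F.card := Finset.card_le_card hOF
      omega

end CWAux

variable {V : Type*} [Fintype V] [DecidableEq V] (G : SimpleGraph V)

def DfsInv (T : Finset V) (S : List V) (U : Finset V) : Prop :=
  (∀ v : V, v ∈ T ∨ v ∈ S ∨ v ∈ U) ∧
  S.Nodup ∧ S.Chain' G.Adj ∧
  (∀ v ∈ S, v ∉ T ∧ v ∉ U) ∧ Disjoint T U ∧
  (∀ t ∈ T, ∀ u ∈ U, ¬ G.Adj t u)

lemma dfs_aux : ∀ (m : ℕ) (T U : Finset V) (S : List V), DfsInv G T S U →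
    2 * U.card + S.length ≤ m → T.card ≤ U.card →
    ∃ T' U' S', DfsInv G T' S' U' ∧ T'.card = U'.card := by
  intro m
  induction m with
  | zero =>
    intro T U S hinv hm hle
    refine ⟨T, U, S, hinv, ?_⟩
    omega
  | succ m ih =>
    intro T U S hinv hm hle
    rcases Nat.eq_or_lt_of_le hle with heq | hlt
    · exact ⟨T, U, S, hinv, heq⟩
    have hU : U.Nonempty := Finset.card_pos.1 (by omega)
    obtain ⟨hcover, hnodup, hchain, hSdisj, hTU, hadj⟩ := hinv
    match S with
    | [] =>
      obtain ⟨u, hu⟩ := hU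
      apply ih T (U.erase u) [u]
      · refine ⟨?_, ?_, ?_, ?_, ?_, ?_⟩
        · intro v
          rcases hcover v with h | h | h
          · exact Or.inl h
          · simp at h
          · by_cases hvu : v = u
            · subst hvu; exact Or.inr (Or.inl (by simp))
            · exact Or.inr (Or.inr (Finset.mem_erase.2 ⟨hvu, h⟩))
        · simp
        · exact List.isChain_singleton u
        · intro v hv
          simp at hv
          subst hv
          exact ⟨fun hT => Finset.disjoint_left.1 hTU hT hu, fun h => (Finset.mem_erase.1 h).1 rfl⟩
        · exact hTU.mono_right (Finset.erase_subset u U)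
        · intro t ht u' hu' ; exact hadj t ht u' (Finset.mem_of_mem_erase hu')
      · have := Finset.card_erase_of_mem hu
        simp only [List.length_cons, List.length_nil] at *
        omega
      · have := Finset.card_erase_of_mem hu
        omega
    | v :: rest =>
      by_cases hnbr : ∃ u ∈ U, G.Adj v u
      · obtain ⟨u, huU, hvu⟩ := hnbr
        apply ih T (U.erase u) (u :: v :: rest)
        · refine ⟨?_, ?_, ?_, ?_, ?_, ?_⟩
          · intro w
            rcases hcover w with h | h | h
            · exact Or.inl h
            · exact Or.inr (Or.inl (List.mem_cons_of_mem u h))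
            · by_cases hwu : w = u
              · subst hwu; exact Or.inr (Or.inl (List.mem_cons_self))
              · exact Or.inr (Or.inr (Finset.mem_erase.2 ⟨hwu, h⟩))
          · refine List.nodup_cons.2 ⟨?_, hnodup⟩
            intro hu
            exact (hSdisj u hu).2 huU
          · exact List.isChain_cons_cons.2 ⟨hvu.symm, hchain⟩
          · intro w hw
            rcases List.mem_cons.1 hw with rfl | hw
            · exact ⟨fun hT => (Finset.disjoint_left.1 hTU hT huU).elim, fun h => (Finset.mem_erase.1 h).1 rfl⟩
            · exact ⟨(hSdisj w hw).1, fun h => (hSdisj w hw).2 (Finset.mem_of_mem_erase h)⟩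
          · exact hTU.mono_right (Finset.erase_subset u U)
          · intro t ht u' hu'; exact hadj t ht u' (Finset.mem_of_mem_erase hu')
        · have := Finset.card_erase_of_mem huU
          simp only [List.length_cons] at *
          omega
        · have := Finset.card_erase_of_mem huU
          omega
      · push_neg at hnbr
        apply ih (insert v T) U rest
        · refine ⟨?_, ?_, ?_, ?_, ?_, ?_⟩
          · intro w
            rcases hcover w with h | h | h
            · exact Or.inl (Finset.mem_insert_of_mem h)
            · rcases List.mem_cons.1 h with rfl | h
              · exact Or.inl (Finset.mem_insert_self _ _)
              · exact Or.inr (Or.inl h)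
            · exact Or.inr (Or.inr h)
          · exact (List.nodup_cons.1 hnodup).2
          · exact (List.isChain_cons.1 hchain).2
          · intro w hw
            constructor
            · intro hwT
              rcases Finset.mem_insert.1 hwT with rfl | hwT
              · exact (List.nodup_cons.1 hnodup).1 hw
              · exact (hSdisj w (List.mem_cons_of_mem v hw)).1 hwT
            · exact (hSdisj w (List.mem_cons_of_mem v hw)).2
          · refine Finset.disjoint_left.2 ?_
            intro w hw hwU
            rcases Finset.mem_insert.1 hw with rfl | hwT
            · exact (hSdisj w (List.mem_cons_self)).2 hwU
            · exact Finset.disjoint_left.1 hTU hwT hwU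
          · intro t ht u hu
            rcases Finset.mem_insert.1 ht with rfl | ht
            · exact hnbr u hu
            · exact hadj t ht u hu
        · simp only [List.length_cons] at hm ⊢
          omega
        · have : (insert v T).card ≤ T.card + 1 := Finset.card_insert_le v T
          omega

lemma walk_of_list : ∀ (l : List V), l ≠ [] → l.Chain' G.Adj →
    ∃ (u v : V) (p : G.Walk u v), p.support = l := by
  intro l
  induction l with
  | nil => intro h; exact absurd rfl h
  | cons a t ih =>
    intro _ hchain
    match t, ih with
    | [], _ => exact ⟨a, a, SimpleGraph.Walk.nil, rfl⟩
    | b :: t', ih =>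
      obtain ⟨u, v, p, hsup⟩ := ih (by simp) (List.isChain_cons_cons.1 hchain).2
      have hub : u = b := by
        have := SimpleGraph.Walk.support_eq_cons p
        rw [hsup] at this
        exact (List.cons.injEq .. ▸ this).1.symm
      subst hub
      exact ⟨a, v, SimpleGraph.Walk.cons (List.isChain_cons_cons.1 hchain).1 p, by simp [hsup]⟩

lemma dfs_path (k : ℕ) (h2k : 2 * k ≤ Fintype.card V)
    (hexp : ∀ A B : Finset V, A.card = k → B.card = k → Disjoint A B →
      ∃ a ∈ A, ∃ b ∈ B, G.Adj a b) :
    ∃ (u v : V) (p : G.Walk u v), p.IsPath ∧ Fintype.card V + 1 ≤ p.length + 2 * k := by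
  have hinv0 : DfsInv G ∅ [] Finset.univ := by
    refine ⟨fun v => Or.inr (Or.inr (Finset.mem_univ v)), List.nodup_nil, List.isChain_nil,
      fun v hv => absurd hv List.not_mem_nil, Finset.disjoint_empty_left _, ?_⟩
    intro t ht; simp at ht
  obtain ⟨T, U, S, hinv, hcards⟩ := dfs_aux G (2 * Finset.univ.card + 0) ∅ Finset.univ []
    hinv0 (Nat.le_refl _) (by simp)
  obtain ⟨hcover, hnodup, hchain, hSdisj, hTU, hadj⟩ := hinv
  -- T.card < k
  have hTk : T.card < k := by
    by_contra hge
    push_neg at hge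
    obtain ⟨A, hAT, hA⟩ := Finset.exists_subset_card_eq hge
    obtain ⟨B, hBU, hB⟩ := Finset.exists_subset_card_eq (hcards ▸ hge)
    obtain ⟨a, ha, b, hb, hab⟩ := hexp A B hA hB (hTU.mono hAT hBU)
    exact hadj a (hAT ha) b (hBU hb) hab
  -- card counting: n ≤ T.card + S.length + U.card
  have hcount : Fintype.card V ≤ T.card + S.length + U.card := by
    have hsub : Finset.univ ⊆ T ∪ S.toFinset ∪ U := by
      intro v _
      rcases hcover v with h | h | h
      · exact Finset.mem_union.2 (Or.inl (Finset.mem_union.2 (Or.inl h)))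
      · exact Finset.mem_union.2 (Or.inl (Finset.mem_union.2 (Or.inr (List.mem_toFinset.2 h))))
      · exact Finset.mem_union.2 (Or.inr h)
    calc Fintype.card V = Finset.univ.card := (Finset.card_univ).symm
      _ ≤ (T ∪ S.toFinset ∪ U).card := Finset.card_le_card hsub
      _ ≤ (T ∪ S.toFinset).card + U.card := Finset.card_union_le _ _
      _ ≤ T.card + S.toFinset.card + U.card := by
          have := Finset.card_union_le T S.toFinset
          omega
      _ ≤ T.card + S.length + U.card := by
          have := S.toFinset_card_le
          omega
  have hSlen : Fintype.card V + 2 ≤ S.length + 2 * k := by omega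
  have hSne : S ≠ [] := by
    intro h
    subst h
    simp at hSlen
    omega
  obtain ⟨u, v, p, hsup⟩ := walk_of_list G S hSne hchain
  refine ⟨u, v, p, ?_, ?_⟩
  · rw [SimpleGraph.Walk.isPath_def, hsup]; exact hnodup
  · have := SimpleGraph.Walk.length_support p
    rw [hsup] at this
    omega

-- real choose bound
lemma choose_bound (n k : ℕ) (hk : 1 ≤ k) :
    (n.choose k : ℝ) ≤ (Real.exp 1 * n / k) ^ k := by
  have hk0 : (0:ℝ) < (k:ℝ) := by exact_mod_cast hk
  have hfact : (k.factorial : ℝ) * (n.choose k : ℝ) ≤ (n:ℝ) ^ k := by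
    have h := Nat.descFactorial_le_pow n k
    have h2 : k.factorial * n.choose k = n.descFactorial k :=
      (Nat.descFactorial_eq_factorial_mul_choose n k).symm
    exact_mod_cast h2 ▸ h
  have hkk : (k:ℝ) ^ k / (k.factorial : ℝ) ≤ Real.exp k := by
    have := Real.sum_le_exp_of_nonneg (x := (k:ℝ)) (by positivity) (k+1)
    refine le_trans ?_ this
    exact Finset.single_le_sum (f := fun i => (k:ℝ)^i / (i.factorial : ℝ))
      (fun i _ => by positivity) (Finset.self_mem_range_succ k)
  -- k! ≥ k^k / exp k
  have hfpos : (0:ℝ) < (k.factorial : ℝ) := by exact_mod_cast k.factorial_pos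
  have hexpk : Real.exp (k:ℝ) = Real.exp 1 ^ k := by
    rw [← Real.exp_nat_mul]; norm_num
  have hfl : (k:ℝ)^k / Real.exp 1 ^ k ≤ (k.factorial : ℝ) := by
    rw [div_le_iff₀ (by positivity)]
    rw [← hexpk]
    rw [div_le_iff₀ hfpos] at hkk
    linarith [hkk]
  -- choose ≤ n^k / k! ≤ n^k exp^k / k^k
  have h1 : (n.choose k : ℝ) ≤ (n:ℝ)^k / (k.factorial : ℝ) := by
    rw [le_div_iff₀ hfpos]; linarith [hfact]
  refine h1.trans ?_
  rw [div_pow, mul_pow]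
  rw [div_le_div_iff₀ hfpos (by positivity)]
  calc (n:ℝ)^k * (k:ℝ)^k = (k:ℝ)^k * (n:ℝ)^k := by ring
    _ ≤ (Real.exp 1 ^ k * (k.factorial:ℝ)) * (n:ℝ)^k := by
        apply mul_le_mul_of_nonneg_right _ (by positivity)
        rw [div_le_iff₀ (by positivity)] at hfl
        linarith [hfl]
    _ = Real.exp 1 ^ k * (n:ℝ)^k * (k.factorial:ℝ) := by ring

lemma exp_neg5_le : Real.exp (-5) ≤ 1/8 := by
  have he1' : (2:ℝ) < Real.exp 1 := by have := Real.exp_one_gt_d9; linarith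
  have h8 : (8:ℝ) < Real.exp 5 := by
    have h5 : Real.exp 5 = Real.exp 1 ^ 5 := by rw [← Real.exp_nat_mul]; norm_num
    have h25 := pow_le_pow_left₀ (show (0:ℝ) ≤ 2 by norm_num) (le_of_lt he1') 5
    norm_num at h25
    rw [h5]; linarith
  rw [Real.exp_neg, inv_eq_one_div, div_le_div_iff₀ (Real.exp_pos 5) (by norm_num)]
  nlinarith

set_option maxHeartbeats 2000000 in
lemma main_numeric (ε L : ℝ) (n q k : ℕ) (hε : 0 < ε) (hεs : ε < Real.exp (-10))
    (hL : L = Real.log (1/ε)) (hk : k = ⌊2 * ε * L * (n:ℝ)⌋₊)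
    (hq : 1 ≤ q) (hqn : (q:ℝ) ≤ ε * n) (hεn : L + 2 ≤ ε * n) :
    1 ≤ k ∧ 2 * k ≤ n ∧ (2:ℝ) * k ≤ 4 * ε * L * n ∧
      (Real.exp 1 * n / k) ^ 2 * ((q:ℝ)/((q:ℝ)+1)) ^ k < 1 := by
  have hL10 : (10:ℝ) < L := by
    rw [hL]
    have h1 : Real.exp 10 < 1/ε := by
      rw [lt_div_iff₀ hε]
      calc Real.exp 10 * ε < Real.exp 10 * Real.exp (-10) := by
            apply mul_lt_mul_of_pos_left hεs (Real.exp_pos 10)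
        _ = 1 := by rw [← Real.exp_add]; norm_num
    calc (10:ℝ) = Real.log (Real.exp 10) := (Real.log_exp 10).symm
      _ < Real.log (1/ε) := Real.log_lt_log (Real.exp_pos 10) h1
  have hLpos : (0:ℝ) < L := by linarith
  have he1 : Real.exp 1 < 2.7182818286 := Real.exp_one_lt_d9
  have he1' : (2:ℝ) < Real.exp 1 := by
    have := Real.exp_one_gt_d9; linarith
  have hlogL : (2:ℝ) ≤ Real.log L := by
    have h1 : Real.exp 2 < L := by
      have : Real.exp 2 = Real.exp 1 * Real.exp 1 := by rw [← Real.exp_add]; norm_num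
      nlinarith
    calc (2:ℝ) = Real.log (Real.exp 2) := (Real.log_exp 2).symm
      _ ≤ Real.log L := le_of_lt (Real.log_lt_log (Real.exp_pos 2) h1)
  have hlogLle : Real.log L ≤ L - 1 := Real.log_le_sub_one_of_pos hLpos
  have hεnpos : (1:ℝ) ≤ ε * n := by linarith
  have hnpos : (0:ℝ) < n := by
    rcases lt_or_ge 0 (n:ℝ) with h | h
    · exact h
    · nlinarith
  have hεLn : (120:ℝ) ≤ ε * L * n := by nlinarith
  -- k bounds
  have hkfl : 2 * ε * L * (n:ℝ) - 1 < (k:ℝ) := hk ▸ Nat.sub_one_lt_floor _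
  have hkub : (k:ℝ) ≤ 2 * ε * L * (n:ℝ) := by
    rw [hk]; apply Nat.floor_le; positivity
  have hklb : ε * L * (n:ℝ) ≤ (k:ℝ) := by nlinarith
  have hkpos : (0:ℝ) < (k:ℝ) := by nlinarith
  have hk1 : 1 ≤ k := by
    apply Nat.one_le_iff_ne_zero.2
    intro h
    rw [h] at hkpos
    simp at hkpos
  -- 4 ε L ≤ 1 via sqrt
  have hsq : Real.sqrt ε < Real.exp (-5) := by
    have : Real.exp (-10) = Real.exp (-5) ^ 2 := by
      rw [← Real.exp_nat_mul]; norm_num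
    rw [show Real.exp (-10) = Real.exp (-5) * Real.exp (-5) by rw [← Real.exp_add]; norm_num] at hεs
    have := Real.sqrt_lt_sqrt (le_of_lt hε) hεs
    rwa [Real.sqrt_mul_self (le_of_lt (Real.exp_pos _))] at this
  have hsqpos : 0 < Real.sqrt ε := Real.sqrt_pos.2 hε
  have hLsq : L ≤ 2 / Real.sqrt ε := by
    have h1 : L = 2 * Real.log (1 / Real.sqrt ε) := by
      have he : (1:ℝ)/ε = (1/Real.sqrt ε) * (1/Real.sqrt ε) := by
        rw [div_mul_div_comm, one_mul, Real.mul_self_sqrt (le_of_lt hε)]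
      rw [hL, he,
        Real.log_mul (by positivity) (by positivity)]
      ring
    rw [h1]
    have h2 : Real.log (1 / Real.sqrt ε) ≤ 1 / Real.sqrt ε - 1 :=
      Real.log_le_sub_one_of_pos (by positivity)
    have : (1:ℝ) / Real.sqrt ε - 1 ≤ 1 / Real.sqrt ε := by linarith
    calc 2 * Real.log (1 / Real.sqrt ε) ≤ 2 * (1 / Real.sqrt ε) := by linarith
      _ = 2 / Real.sqrt ε := by ring
  have hεL : 4 * ε * L ≤ 1 := by
    have h1 : ε * L ≤ ε * (2 / Real.sqrt ε) := by nlinarith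
    have h2 : ε * (2 / Real.sqrt ε) = 2 * Real.sqrt ε := by
      rw [mul_div_assoc', div_eq_iff (ne_of_gt hsqpos)]
      nlinarith [Real.mul_self_sqrt (le_of_lt hε)]
    have h4 : Real.exp (-5) ≤ 1/8 := exp_neg5_le
    rw [h2] at h1
    have h5 : Real.sqrt ε ≤ 1/8 := le_trans (le_of_lt hsq) h4
    linarith
  have h2kn : 2 * k ≤ n := by
    have h : (2:ℝ) * (k:ℝ) ≤ (n:ℝ) := by nlinarith
    exact_mod_cast h
  refine ⟨hk1, h2kn, by nlinarith, ?_⟩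
  -- main inequality
  have hq1 : (0:ℝ) < (q:ℝ) + 1 := by positivity
  have hqr : (1:ℝ) ≤ (q:ℝ) := by exact_mod_cast hq
  -- log (e n / k) ≤ 1 + L - log L
  have henk_pos : (0:ℝ) < Real.exp 1 * n / k := by positivity
  have hlog1 : Real.log (Real.exp 1 * n / k) ≤ 1 + L - Real.log L := by
    have hle : Real.exp 1 * n / k ≤ Real.exp 1 / (ε * L) := by
      rw [div_le_div_iff₀ hkpos (by positivity)]
      calc Real.exp 1 * n * (ε * L) = Real.exp 1 * (ε * L * n) := by ring
        _ ≤ Real.exp 1 * k := by nlinarith [Real.exp_pos 1]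
        _ = Real.exp 1 * k := rfl
    calc Real.log (Real.exp 1 * n / k) ≤ Real.log (Real.exp 1 / (ε * L)) :=
          Real.log_le_log henk_pos hle
      _ = Real.log (Real.exp 1) - Real.log (ε * L) := Real.log_div (by positivity) (by positivity)
      _ = 1 - (Real.log ε + Real.log L) := by
          rw [Real.log_exp, Real.log_mul (ne_of_gt hε) (ne_of_gt hLpos)]
      _ = 1 + L - Real.log L := by
          have : Real.log ε = -L := by
            have : L = -Real.log ε := by rw [hL, show (1:ℝ)/ε = ε⁻¹ by ring, Real.log_inv]
            linarith
          rw [this]; ring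
  have hM : (0:ℝ) ≤ 1 + L - Real.log L := by linarith
  have hkey : 2 * ((q:ℝ)+1) * Real.log (Real.exp 1 * n / k) < (k:ℝ) := by
    have h1 : 2 * ((q:ℝ)+1) * Real.log (Real.exp 1 * n / k) ≤ (2*ε*n+2) * (1 + L - Real.log L) := by
      have ha : 2 * ((q:ℝ)+1) ≤ 2*ε*n+2 := by linarith
      have hb : (0:ℝ) ≤ 2 * ((q:ℝ)+1) := by positivity
      calc 2 * ((q:ℝ)+1) * Real.log (Real.exp 1 * n / k)
          ≤ 2 * ((q:ℝ)+1) * (1 + L - Real.log L) := mul_le_mul_of_nonneg_left hlog1 hb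
        _ ≤ (2*ε*n+2) * (1 + L - Real.log L) := mul_le_mul_of_nonneg_right ha hM
    have h2 : (2*ε*n+2) * (1 + L - Real.log L) ≤ 2*ε*L*n - 1 := by nlinarith
    linarith
  -- (e n/k)^2 < exp(k/(q+1))
  have hstep1 : (Real.exp 1 * n / k)^2 < Real.exp ((k:ℝ)/((q:ℝ)+1)) := by
    have heq : (Real.exp 1 * n / k)^2 = Real.exp (2 * Real.log (Real.exp 1 * n / k)) := by
      rw [show (2:ℝ) * Real.log (Real.exp 1 * n / k) = ((2:ℕ):ℝ) * Real.log (Real.exp 1 * n / k)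
        by norm_num, ← Real.log_pow, Real.exp_log (by positivity)]
    rw [heq]
    apply Real.exp_lt_exp.2
    rw [lt_div_iff₀ hq1]
    nlinarith [hkey]
  have hstep2 : ((q:ℝ)/((q:ℝ)+1))^k ≤ Real.exp (-((k:ℝ)/((q:ℝ)+1))) := by
    have hμ : (q:ℝ)/((q:ℝ)+1) = -(1/((q:ℝ)+1)) + 1 := by field_simp; ring
    have hb := Real.add_one_le_exp (-(1/((q:ℝ)+1)))
    have hμ0 : (0:ℝ) ≤ (q:ℝ)/((q:ℝ)+1) := by positivity
    calc ((q:ℝ)/((q:ℝ)+1))^k ≤ (Real.exp (-(1/((q:ℝ)+1))))^k := by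
          apply pow_le_pow_left₀ hμ0
          rw [hμ]; exact hb
      _ = Real.exp (-((k:ℝ)/((q:ℝ)+1))) := by
          rw [← Real.exp_nat_mul]
          congr 1
          ring
  calc (Real.exp 1 * n / k)^2 * ((q:ℝ)/((q:ℝ)+1))^k
      ≤ (Real.exp 1 * n / k)^2 * Real.exp (-((k:ℝ)/((q:ℝ)+1))) := by
        apply mul_le_mul_of_nonneg_left hstep2 (by positivity)
    _ < Real.exp ((k:ℝ)/((q:ℝ)+1)) * Real.exp (-((k:ℝ)/((q:ℝ)+1))) := by
        apply mul_lt_mul_of_pos_right hstep1 (Real.exp_pos _)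
    _ = 1 := by rw [← Real.exp_add]; simp

lemma clientCanAux_mono {α' : Type*} [DecidableEq α'] {q : ℕ} {P P' : Finset α' → Prop}
    (h : ∀ C, P C → P' C) :
    ∀ (fuel : ℕ) (C F : Finset α'), ClientCanAux q P fuel C F → ClientCanAux q P' fuel C F := by
  intro fuel
  induction fuel with
  | zero =>
    intro C F hc
    exact ⟨hc.1, h C hc.2⟩
  | succ m ih =>
    intro C F hc
    rw [ClientCanAux] at hc ⊢
    by_cases hF : F = ∅
    · rw [if_pos hF] at hc ⊢
      exact h C hc
    · rw [if_neg hF] at hc ⊢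
      intro O hOF hO hOq
      obtain ⟨x, hx, hrec⟩ := hc O hOF hO hOq
      exact ⟨x, hx, ih _ _ hrec⟩

lemma pot_init {α' : Type*} [DecidableEq α'] {I : Type*} (q : ℕ) (ι : Finset I)
    (Bf : I → Finset α') (X : Finset α') (m : ℕ)
    (hsub : ∀ i ∈ ι, Bf i ⊆ X) (hcard : ∀ i ∈ ι, (Bf i).card = m) :
    pot q ι Bf ∅ X = (ι.card : ℝ) * ((q:ℝ)/((q:ℝ)+1))^m := by
  rw [pot]
  rw [Finset.sum_congr rfl (fun i hi => ?_), Finset.sum_const, nsmul_eq_mul]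
  rw [Finset.inter_empty, if_pos rfl, Finset.inter_eq_left.mpr (hsub i hi), hcard i hi]

lemma pairEdges_card {n : ℕ} (A B : Finset (Fin n)) (hd : Disjoint A B) :
    ((A ×ˢ B).image (fun ab => s(ab.1, ab.2))).card = A.card * B.card := by
  rw [Finset.card_image_of_injOn, Finset.card_product]
  rintro ⟨a, b⟩ hx ⟨c, d⟩ hy hxy
  simp only [Finset.mem_coe, Finset.mem_product] at hx hy
  simp only [Sym2.eq_iff] at hxy
  rcases hxy with ⟨rfl, rfl⟩ | ⟨rfl, rfl⟩
  · rfl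
  · exact absurd hy.1 (fun h => Finset.disjoint_left.1 hd h hx.2)

lemma pairEdges_subset {n : ℕ} (A B : Finset (Fin n)) (hd : Disjoint A B) :
    ((A ×ˢ B).image (fun ab => s(ab.1, ab.2))) ⊆ Kboard n := by
  intro e he
  obtain ⟨⟨a, b⟩, hab, rfl⟩ := Finset.mem_image.1 he
  have hmem := Finset.mem_product.1 hab
  have hne : a ≠ b := fun h => Finset.disjoint_left.1 hd hmem.1 (h ▸ hmem.2)
  simp only [Kboard, SimpleGraph.mem_edgeFinset, SimpleGraph.mem_edgeSet, SimpleGraph.top_adj]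
  exact hne

/-- Theorem 3(iv): for every small enough `ε > 0` and `n` large enough, if `q ≤ ε n` then
`P(n,q) ≥ (1 - 4 ε ln(1/ε)) n`: Client can ensure a path with at least
`(1 - 4 ε ln(1/ε)) n` edges. -/
theorem stmt8 :
    ∃ ε₀ : ℝ, 0 < ε₀ ∧ ∀ ε : ℝ, 0 < ε → ε < ε₀ →
      ∃ n₀ : ℕ, ∀ n : ℕ, n₀ < n → ∀ q : ℕ, 0 < q → (q : ℝ) ≤ ε * (n : ℝ) →
        ClientCanForce (Kboard n) q
          (fun C => ∃ (u v : Fin n) (p : (clientGraph C).Walk u v), p.IsPath ∧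
            (1 - 4 * ε * Real.log (1 / ε)) * (n : ℝ) ≤ (p.length : ℝ)) := by
  refine ⟨Real.exp (-10), Real.exp_pos _, ?_⟩
  intro ε hε hεs
  set L : ℝ := Real.log (1/ε) with hLdef
  refine ⟨⌈(L + 2)/ε⌉₊, ?_⟩
  intro n hn q hq hqn
  have hL0 : 0 < L := by
    rw [hLdef]
    apply Real.log_pos
    rw [lt_div_iff₀ hε, one_mul]
    calc ε < Real.exp (-10) := hεs
      _ < 1 := by
        rw [show (1:ℝ) = Real.exp 0 by simp]
        exact Real.exp_lt_exp.2 (by norm_num)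
  have hεn : L + 2 ≤ ε * n := by
    have h1 : (L + 2)/ε ≤ (⌈(L + 2)/ε⌉₊ : ℝ) := Nat.le_ceil _
    have h2 : ((⌈(L + 2)/ε⌉₊ : ℕ) : ℝ) + 1 ≤ (n : ℝ) := by exact_mod_cast hn
    rw [div_le_iff₀ hε] at h1
    nlinarith
  set k : ℕ := ⌊2 * ε * L * (n:ℝ)⌋₊ with hkdef
  have hq1 : 1 ≤ q := hq
  obtain ⟨hk1, h2kn, hk4, hmain⟩ := main_numeric ε L n q k hε hεs hLdef hkdef hq1 hqn hεn
  classical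
  set ι : Finset (Finset (Fin n) × Finset (Fin n)) :=
    ((Finset.univ.powersetCard k) ×ˢ (Finset.univ.powersetCard k)).filter
      (fun p => Disjoint p.1 p.2) with hιdef
  set Bf : (Finset (Fin n) × Finset (Fin n)) → Finset (Sym2 (Fin n)) :=
    (fun p => (p.1 ×ˢ p.2).image (fun ab => s(ab.1, ab.2))) with hBfdef
  have hmem : ∀ i ∈ ι, i.1.card = k ∧ i.2.card = k ∧ Disjoint i.1 i.2 := by
    intro i hi
    rw [hιdef, Finset.mem_filter, Finset.mem_product] at hi
    exact ⟨Finset.mem_powersetCard_univ.1 hi.1.1, Finset.mem_powersetCard_univ.1 hi.1.2, hi.2⟩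
  have hsub : ∀ i ∈ ι, Bf i ⊆ Kboard n := fun i hi =>
    pairEdges_subset i.1 i.2 (hmem i hi).2.2
  have hcard : ∀ i ∈ ι, (Bf i).card = k * k := by
    intro i hi
    obtain ⟨h1, h2, hd⟩ := hmem i hi
    rw [hBfdef]
    rw [pairEdges_card i.1 i.2 hd, h1, h2]
  -- potential bound
  have hιcard : (ι.card : ℝ) ≤ ((n.choose k : ℕ) : ℝ) ^ 2 := by
    have h1 : ι.card ≤ ((Finset.univ.powersetCard k (α := Fin n)) ×ˢ
        (Finset.univ.powersetCard k (α := Fin n))).card := Finset.card_filter_le _ _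
    rw [Finset.card_product, Finset.card_powersetCard, Finset.card_univ, Fintype.card_fin] at h1
    have : (ι.card : ℝ) ≤ ((n.choose k * n.choose k : ℕ) : ℝ) := by exact_mod_cast h1
    rw [sq]
    exact_mod_cast this
  have hμ0 : (0:ℝ) ≤ (q:ℝ)/((q:ℝ)+1) := by positivity
  have hpot : pot q ι Bf ∅ (Kboard n) < 1 := by
    rw [pot_init q ι Bf (Kboard n) (k*k) hsub hcard]
    have hcb : ((n.choose k : ℕ) : ℝ) ≤ (Real.exp 1 * n / k) ^ k := choose_bound n k hk1
    have henk0 : (0:ℝ) ≤ Real.exp 1 * n / k := by positivity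
    calc (ι.card : ℝ) * ((q:ℝ)/((q:ℝ)+1))^(k*k)
        ≤ ((n.choose k : ℕ) : ℝ)^2 * ((q:ℝ)/((q:ℝ)+1))^(k*k) :=
          mul_le_mul_of_nonneg_right hιcard (by positivity)
      _ ≤ ((Real.exp 1 * n / k) ^ k)^2 * ((q:ℝ)/((q:ℝ)+1))^(k*k) := by
          apply mul_le_mul_of_nonneg_right _ (by positivity)
          have := pow_le_pow_left₀ (by positivity) hcb 2
          exact this
      _ = ((Real.exp 1 * n / k) ^ 2 * ((q:ℝ)/((q:ℝ)+1))^k)^k := by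
          rw [mul_pow, ← pow_mul, ← pow_mul, ← pow_mul]
          ring_nf
      _ < 1 := by
          apply pow_lt_one₀ (by positivity) hmain (by omega)
  have hforce := client_can_hit q ι Bf (Kboard n).card ∅ (Kboard n) (le_refl _) hpot
  rw [ClientCanForce]
  apply clientCanAux_mono _ _ _ _ hforce
  -- transfer: hitting all pairs implies long path
  intro C hC
  have hexp : ∀ A B : Finset (Fin n), A.card = k → B.card = k → Disjoint A B →
      ∃ a ∈ A, ∃ b ∈ B, (clientGraph C).Adj a b := by
    intro A B hA hB hd
    have hiι : (A, B) ∈ ι := by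
      rw [hιdef, Finset.mem_filter, Finset.mem_product]
      exact ⟨⟨Finset.mem_powersetCard_univ.2 hA, Finset.mem_powersetCard_univ.2 hB⟩, hd⟩
    obtain ⟨e, he⟩ := hC (A, B) hiι
    rw [Finset.mem_inter] at he
    obtain ⟨heB, heC⟩ := he
    obtain ⟨⟨a, b⟩, hab, rfl⟩ := Finset.mem_image.1 heB
    have hmem2 := Finset.mem_product.1 hab
    have hne : a ≠ b := fun h => Finset.disjoint_left.1 hd hmem2.1 (h ▸ hmem2.2)
    refine ⟨a, hmem2.1, b, hmem2.2, ?_⟩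
    rw [clientGraph, SimpleGraph.fromEdgeSet_adj]
    exact ⟨heC, hne⟩
  have h2k' : 2 * k ≤ Fintype.card (Fin n) := by
    rw [Fintype.card_fin]; exact h2kn
  obtain ⟨u, v, p, hpath, hlen⟩ := dfs_path (clientGraph C) k h2k' hexp
  refine ⟨u, v, p, hpath, ?_⟩
  rw [Fintype.card_fin] at hlen
  have hlenR : (n : ℝ) + 1 ≤ (p.length : ℝ) + 2 * k := by exact_mod_cast hlen
  have : (1 - 4 * ε * L) * (n:ℝ) ≤ (p.length : ℝ) := by nlinarith
  exact this
end

section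
/- Let q be a positive integer, let X be a finite set, let F be a family of subsets of X, and let Φ(F) = Σ_{A∈F} (q+1)^{−|A|}. Then, playing a Client-Waiter game with bias q on the board X, Client has a strategy guaranteeing that at the end of the game there exists a set X_C contained in the set of elements he claimed such that |X_C| ≥ ⌊|X|/(q+1)⌋ and the number of sets A ∈ F with A ⊆ X_C is at most 2·Φ(F). -/
open Finset

variable {α : Type*}

set_option linter.unusedSectionVars false
set_option linter.unusedVariables false

namespace Stmt10Proof

variable {α : Type*} [DecidableEq α]

/-- Elementwise value function. -/
def phiF (ι : ℝ) (Xc Fr : Finset α) (pd : Option α) (z : ℝ) : α → ℝ :=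
  fun e => if e ∈ Xc then 1 else if pd = some e then z else if e ∈ Fr then ι else 0

/-- Potential of a family of sets. -/
def pot (F : Finset (Finset α)) (φ : α → ℝ) : ℝ := ∑ A ∈ F, ∏ e ∈ A, φ e

lemma phiF_nonneg {ι z : ℝ} (hι : 0 ≤ ι) (hz : 0 ≤ z) (Xc Fr : Finset α) (pd : Option α)
    (e : α) : 0 ≤ phiF ι Xc Fr pd z e := by
  unfold phiF; split_ifs <;> first | exact zero_le_one | assumption | exact le_rfl

lemma pot_nonneg {F : Finset (Finset α)} {φ : α → ℝ} (h : ∀ e, 0 ≤ φ e) : 0 ≤ pot F φ :=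
  Finset.sum_nonneg fun A _ => Finset.prod_nonneg fun e _ => h e

lemma prod_one_point {A : Finset α} {f g : α → ℝ} {y : α} (hy : y ∈ A)
    (h : ∀ e ∈ A, e ≠ y → f e = g e) :
    ∏ e ∈ A, f e = f y * ∏ e ∈ A.erase y, g e := by
  rw [← Finset.mul_prod_erase A f hy]
  congr 1
  exact Finset.prod_congr rfl fun e he =>
    h e (Finset.mem_of_mem_erase he) (Finset.ne_of_mem_erase he)

lemma prod_two_point {A : Finset α} {f g : α → ℝ} {y₀ y : α} (hy₀ : y₀ ∈ A) (hy : y ∈ A)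
    (hne : y ≠ y₀) (h : ∀ e ∈ A, e ≠ y₀ → e ≠ y → f e = g e) :
    ∏ e ∈ A, f e = f y₀ * (f y * ∏ e ∈ (A.erase y₀).erase y, g e) := by
  rw [← Finset.mul_prod_erase A f hy₀,
    ← Finset.mul_prod_erase _ f (Finset.mem_erase.mpr ⟨hne, hy⟩)]
  congr 2
  refine Finset.prod_congr rfl fun e he => ?_
  have h1 : e ∈ A.erase y₀ := Finset.mem_of_mem_erase he
  exact h e (Finset.mem_of_mem_erase h1) (Finset.ne_of_mem_erase h1) (Finset.ne_of_mem_erase he)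

/-- Key one-round averaging inequality, per set `A`: two-branch (pending element) version. -/
lemma keyA {φ : α → ℝ} {Φ₁ Φ₂ : α → α → ℝ} (hφ : ∀ e, 0 ≤ φ e)
    {O : Finset α} {y₀ : α} (hy₀O : y₀ ∉ O)
    {ι z p a₁ b₁ a₂ b₂ : ℝ}
    (hφy₀ : φ y₀ = z) (hφO : ∀ e ∈ O, φ e = ι)
    (hΦ₁ : ∀ x ∈ O, Φ₁ x y₀ = a₁ ∧ Φ₁ x x = b₁ ∧ (∀ e ∈ O, e ≠ x → Φ₁ x e = 0) ∧
      (∀ e, e ≠ y₀ → e ∉ O → Φ₁ x e = φ e))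
    (hΦ₂ : ∀ x ∈ O, Φ₂ x y₀ = a₂ ∧ Φ₂ x x = b₂ ∧ (∀ e ∈ O, e ≠ x → Φ₂ x e = 0) ∧
      (∀ e, e ≠ y₀ → e ∉ O → Φ₂ x e = φ e))
    (hM1 : p * a₁ + (1 - p) * a₂ = z)
    (hM2 : p * b₁ + (1 - p) * b₂ = O.card * ι)
    (hM3 : p * (a₁ * b₁) + (1 - p) * (a₂ * b₂) ≤ z * (O.card * ι))
    (A : Finset α) :
    ∑ x ∈ O, (p * ∏ e ∈ A, Φ₁ x e + (1 - p) * ∏ e ∈ A, Φ₂ x e)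
      ≤ O.card * ∏ e ∈ A, φ e := by
  rcases (A ∩ O).eq_empty_or_nonempty with hT | hT
  · -- A ∩ O = ∅
    have hAO : ∀ e ∈ A, e ∉ O := by
      intro e he heO
      exact absurd (Finset.mem_inter.mpr ⟨he, heO⟩) (by simp [hT])
    by_cases hy₀A : y₀ ∈ A
    · set c := ∏ e ∈ A.erase y₀, φ e with hc
      have h1 : ∀ x ∈ O, ∏ e ∈ A, Φ₁ x e = a₁ * c := by
        intro x hx
        obtain ⟨e1, _, _, e4⟩ := hΦ₁ x hx
        rw [prod_one_point hy₀A (fun e he hey => e4 e hey (hAO e he)), e1]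
      have h2 : ∀ x ∈ O, ∏ e ∈ A, Φ₂ x e = a₂ * c := by
        intro x hx
        obtain ⟨e1, _, _, e4⟩ := hΦ₂ x hx
        rw [prod_one_point hy₀A (fun e he hey => e4 e hey (hAO e he)), e1]
      have hφA : ∏ e ∈ A, φ e = z * c := by
        rw [prod_one_point hy₀A (fun e _ _ => rfl), hφy₀]
      calc ∑ x ∈ O, (p * ∏ e ∈ A, Φ₁ x e + (1 - p) * ∏ e ∈ A, Φ₂ x e)
          = ∑ _x ∈ O, (p * a₁ + (1 - p) * a₂) * c := by
            refine Finset.sum_congr rfl fun x hx => ?_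
            rw [h1 x hx, h2 x hx]; ring
        _ = O.card * (z * c) := by rw [Finset.sum_const, hM1, nsmul_eq_mul]
        _ ≤ O.card * ∏ e ∈ A, φ e := le_of_eq (by rw [hφA])
    · have h1 : ∀ x ∈ O, ∏ e ∈ A, Φ₁ x e = ∏ e ∈ A, φ e := by
        intro x hx
        obtain ⟨_, _, _, e4⟩ := hΦ₁ x hx
        exact Finset.prod_congr rfl fun e he => e4 e (fun h => hy₀A (h ▸ he)) (hAO e he)
      have h2 : ∀ x ∈ O, ∏ e ∈ A, Φ₂ x e = ∏ e ∈ A, φ e := by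
        intro x hx
        obtain ⟨_, _, _, e4⟩ := hΦ₂ x hx
        exact Finset.prod_congr rfl fun e he => e4 e (fun h => hy₀A (h ▸ he)) (hAO e he)
      calc ∑ x ∈ O, (p * ∏ e ∈ A, Φ₁ x e + (1 - p) * ∏ e ∈ A, Φ₂ x e)
          = ∑ _x ∈ O, ∏ e ∈ A, φ e := by
            refine Finset.sum_congr rfl fun x hx => ?_
            rw [h1 x hx, h2 x hx]; ring
        _ ≤ O.card * ∏ e ∈ A, φ e := le_of_eq (by rw [Finset.sum_const, nsmul_eq_mul])
  · by_cases hcard : (A ∩ O).card = 1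
    · obtain ⟨y, hy⟩ := Finset.card_eq_one.mp hcard
      have hyA : y ∈ A := (Finset.mem_inter.mp (hy ▸ Finset.mem_singleton_self y)).1
      have hyO : y ∈ O := (Finset.mem_inter.mp (hy ▸ Finset.mem_singleton_self y)).2
      have huniq : ∀ e ∈ A, e ∈ O → e = y := by
        intro e he heO
        have h' : e ∈ A ∩ O := Finset.mem_inter.mpr ⟨he, heO⟩
        rw [hy] at h'; exact Finset.mem_singleton.mp h'
      have hyy₀ : y ≠ y₀ := fun h => hy₀O (h ▸ hyO)
      have hterm0 : ∀ x ∈ O, x ≠ y →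
          p * ∏ e ∈ A, Φ₁ x e + (1 - p) * ∏ e ∈ A, Φ₂ x e = 0 := by
        intro x hx hxy
        obtain ⟨_, _, e3, _⟩ := hΦ₁ x hx
        obtain ⟨_, _, f3, _⟩ := hΦ₂ x hx
        rw [Finset.prod_eq_zero hyA (e3 y hyO (fun h => hxy h.symm)),
          Finset.prod_eq_zero hyA (f3 y hyO (fun h => hxy h.symm))]
        ring
      rw [Finset.sum_eq_single_of_mem y hyO hterm0]
      obtain ⟨e1, e2, _, e4⟩ := hΦ₁ y hyO
      obtain ⟨f1, f2, _, f4⟩ := hΦ₂ y hyO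
      by_cases hy₀A : y₀ ∈ A
      · set c := ∏ e ∈ (A.erase y₀).erase y, φ e with hc
        have hcnn : 0 ≤ c := Finset.prod_nonneg fun e _ => hφ e
        have hprod1 : ∏ e ∈ A, Φ₁ y e = a₁ * (b₁ * c) := by
          rw [prod_two_point hy₀A hyA hyy₀
            (fun e he hey₀ hey => e4 e hey₀ (fun heO => hey (huniq e he heO))), e1, e2]
        have hprod2 : ∏ e ∈ A, Φ₂ y e = a₂ * (b₂ * c) := by
          rw [prod_two_point hy₀A hyA hyy₀
            (fun e he hey₀ hey => f4 e hey₀ (fun heO => hey (huniq e he heO))), f1, f2]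
        have hprodφ : ∏ e ∈ A, φ e = z * (ι * c) := by
          rw [prod_two_point hy₀A hyA hyy₀ (fun e _ _ _ => rfl), hφy₀, hφO y hyO]
        rw [hprod1, hprod2, hprodφ]
        have := mul_le_mul_of_nonneg_right hM3 hcnn
        nlinarith [this]
      · set c := ∏ e ∈ A.erase y, φ e with hc
        have hprod1 : ∏ e ∈ A, Φ₁ y e = b₁ * c := by
          rw [prod_one_point hyA (fun e he hey =>
            e4 e (fun h => hy₀A (h ▸ he)) (fun heO => hey (huniq e he heO))), e2]
        have hprod2 : ∏ e ∈ A, Φ₂ y e = b₂ * c := by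
          rw [prod_one_point hyA (fun e he hey =>
            f4 e (fun h => hy₀A (h ▸ he)) (fun heO => hey (huniq e he heO))), f2]
        have hprodφ : ∏ e ∈ A, φ e = ι * c := by
          rw [prod_one_point hyA (fun e _ _ => rfl), hφO y hyO]
        rw [hprod1, hprod2, hprodφ]
        calc p * (b₁ * c) + (1 - p) * (b₂ * c) = (p * b₁ + (1 - p) * b₂) * c := by ring
          _ ≤ (O.card : ℝ) * (ι * c) := le_of_eq (by rw [hM2]; ring)
    · have h2 : 1 < (A ∩ O).card := by
        have h1 : 0 < (A ∩ O).card := Finset.card_pos.mpr hT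
        omega
      have hterm0 : ∀ x ∈ O,
          p * ∏ e ∈ A, Φ₁ x e + (1 - p) * ∏ e ∈ A, Φ₂ x e = 0 := by
        intro x hx
        obtain ⟨y, hyAO, hyx⟩ := Finset.exists_mem_ne h2 x
        have hyA : y ∈ A := (Finset.mem_inter.mp hyAO).1
        have hyO : y ∈ O := (Finset.mem_inter.mp hyAO).2
        obtain ⟨_, _, e3, _⟩ := hΦ₁ x hx
        obtain ⟨_, _, f3, _⟩ := hΦ₂ x hx
        rw [Finset.prod_eq_zero hyA (e3 y hyO hyx), Finset.prod_eq_zero hyA (f3 y hyO hyx)]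
        ring
      rw [Finset.sum_congr rfl hterm0, Finset.sum_const, smul_zero]
      exact mul_nonneg (Nat.cast_nonneg _) (Finset.prod_nonneg fun e _ => hφ e)

/-- Key one-round averaging inequality, per set `A`: single-branch (no pending) version. -/
lemma keyA0 {φ : α → ℝ} {Φ : α → α → ℝ} (hφ : ∀ e, 0 ≤ φ e)
    {O : Finset α} {ι b : ℝ}
    (hφO : ∀ e ∈ O, φ e = ι)
    (hΦ : ∀ x ∈ O, Φ x x = b ∧ (∀ e ∈ O, e ≠ x → Φ x e = 0) ∧
      (∀ e, e ∉ O → Φ x e = φ e))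
    (hM : b = O.card * ι)
    (A : Finset α) :
    ∑ x ∈ O, ∏ e ∈ A, Φ x e ≤ O.card * ∏ e ∈ A, φ e := by
  rcases (A ∩ O).eq_empty_or_nonempty with hT | hT
  · have hAO : ∀ e ∈ A, e ∉ O := by
      intro e he heO
      exact absurd (Finset.mem_inter.mpr ⟨he, heO⟩) (by simp [hT])
    have h1 : ∀ x ∈ O, ∏ e ∈ A, Φ x e = ∏ e ∈ A, φ e := by
      intro x hx
      obtain ⟨_, _, e3⟩ := hΦ x hx
      exact Finset.prod_congr rfl fun e he => e3 e (hAO e he)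
    rw [Finset.sum_congr rfl h1, Finset.sum_const, nsmul_eq_mul]
  · by_cases hcard : (A ∩ O).card = 1
    · obtain ⟨y, hy⟩ := Finset.card_eq_one.mp hcard
      have hyA : y ∈ A := (Finset.mem_inter.mp (hy ▸ Finset.mem_singleton_self y)).1
      have hyO : y ∈ O := (Finset.mem_inter.mp (hy ▸ Finset.mem_singleton_self y)).2
      have huniq : ∀ e ∈ A, e ∈ O → e = y := by
        intro e he heO
        have h' : e ∈ A ∩ O := Finset.mem_inter.mpr ⟨he, heO⟩
        rw [hy] at h'; exact Finset.mem_singleton.mp h'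
      have hterm0 : ∀ x ∈ O, x ≠ y → ∏ e ∈ A, Φ x e = 0 := by
        intro x hx hxy
        obtain ⟨_, e2, _⟩ := hΦ x hx
        exact Finset.prod_eq_zero hyA (e2 y hyO (fun h => hxy h.symm))
      rw [Finset.sum_eq_single_of_mem y hyO hterm0]
      obtain ⟨e1, _, e3⟩ := hΦ y hyO
      have hprod1 : ∏ e ∈ A, Φ y e = b * ∏ e ∈ A.erase y, φ e := by
        rw [prod_one_point hyA (fun e he hey => e3 e (fun heO => hey (huniq e he heO))), e1]
      have hprodφ : ∏ e ∈ A, φ e = ι * ∏ e ∈ A.erase y, φ e := by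
        rw [prod_one_point hyA (fun e _ _ => rfl), hφO y hyO]
      rw [hprod1, hprodφ, hM]
      exact le_of_eq (by ring)
    · have h2 : 1 < (A ∩ O).card := by
        have h1 : 0 < (A ∩ O).card := Finset.card_pos.mpr hT
        omega
      have hterm0 : ∀ x ∈ O, ∏ e ∈ A, Φ x e = 0 := by
        intro x hx
        obtain ⟨y, hyAO, hyx⟩ := Finset.exists_mem_ne h2 x
        obtain ⟨_, e2, _⟩ := hΦ x hx
        exact Finset.prod_eq_zero (Finset.mem_inter.mp hyAO).1
          (e2 y (Finset.mem_inter.mp hyAO).2 hyx)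
      rw [Finset.sum_congr rfl hterm0, Finset.sum_const, smul_zero]
      exact mul_nonneg (Nat.cast_nonneg _) (Finset.prod_nonneg fun e _ => hφ e)

lemma convex_min {p W1 W2 W : ℝ} (hp0 : 0 ≤ p) (hp1 : p ≤ 1)
    (h : p * W1 + (1 - p) * W2 ≤ W) : W1 ≤ W ∨ W2 ≤ W := by
  by_contra hc
  push_neg at hc
  obtain ⟨h1, h2⟩ := hc
  rcases hp0.eq_or_lt with hp | hp
  · rw [← hp] at h
    nlinarith
  · nlinarith [mul_lt_mul_of_pos_left h1 hp,
      mul_le_mul_of_nonneg_left h2.le (by linarith : (0:ℝ) ≤ 1 - p)]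

lemma finishPD {q : ℕ} {X : Finset α} {F : Finset (Finset α)} {C Xc : Finset α}
    {pd : Option α} {z : ℝ}
    (hXcC : Xc ⊆ C) (hz0 : 0 ≤ z) (hz1 : z < 1)
    (hsize : ((q : ℝ) + 1) * (Xc.card + z) = X.card)
    (hpot : pot F (phiF (((q:ℝ)+1)⁻¹) Xc ∅ pd z) ≤ ∑ A ∈ F, (((q : ℝ) + 1) ^ A.card)⁻¹) :
    ∃ Xc' ⊆ C, X.card / (q + 1) ≤ Xc'.card ∧
      (((F.filter (fun A => A ⊆ Xc')).card : ℝ)) ≤ 2 * ∑ A ∈ F, (((q : ℝ) + 1) ^ A.card)⁻¹ := by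
  have hq1 : (0:ℝ) < (q:ℝ)+1 := by positivity
  refine ⟨Xc, hXcC, ?_, ?_⟩
  · have hR : (X.card : ℝ) < ((Xc.card + 1) * (q + 1) : ℕ) := by
      push_cast
      nlinarith
    have hN : X.card < (Xc.card + 1) * (q + 1) := by exact_mod_cast hR
    have := (Nat.div_lt_iff_lt_mul (by omega : 0 < q + 1)).mpr hN
    omega
  · have h1 : ((F.filter (fun A => A ⊆ Xc)).card : ℝ)
        ≤ pot F (phiF (((q:ℝ)+1)⁻¹) Xc ∅ pd z) := by
      rw [Finset.card_filter]
      push_cast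
      unfold pot
      refine Finset.sum_le_sum fun A _ => ?_
      by_cases hA : A ⊆ Xc
      · simp only [hA, if_true]
        have he1 : ∀ e ∈ A, phiF (((q:ℝ)+1)⁻¹) Xc ∅ pd z e = 1 := by
          intro e he
          simp [phiF, hA he]
        rw [Finset.prod_congr rfl he1, Finset.prod_const_one]
      · simp only [hA, if_false]
        exact Finset.prod_nonneg fun e _ => phiF_nonneg (by positivity) hz0 _ _ _ _
    have h2 : (0:ℝ) ≤ ∑ A ∈ F, (((q : ℝ) + 1) ^ A.card)⁻¹ :=
      Finset.sum_nonneg fun A _ => by positivity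
    nlinarith [h1, hpot, h2]

lemma mainAux (q : ℕ) (X : Finset α) (F : Finset (Finset α)) :
    ∀ (fuel : ℕ) (C Fr Xc : Finset α) (pd : Option α) (z : ℝ),
      Fr.card ≤ fuel → Xc ⊆ C → Disjoint Xc Fr →
      (∀ y, pd = some y → y ∈ C ∧ y ∉ Xc ∧ y ∉ Fr) →
      (pd = none → z = 0) → 0 ≤ z → z < 1 →
      ((q : ℝ) + 1) * (Xc.card + z) + Fr.card = X.card →
      pot F (phiF (((q:ℝ)+1)⁻¹) Xc Fr pd z) ≤ ∑ A ∈ F, (((q : ℝ) + 1) ^ A.card)⁻¹ →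
      ClientCanAux q (fun Cl => ∃ Xc' ⊆ Cl, X.card / (q + 1) ≤ Xc'.card ∧
        (((F.filter (fun A => A ⊆ Xc')).card : ℝ)) ≤ 2 * ∑ A ∈ F, (((q:ℝ)+1) ^ A.card)⁻¹)
        fuel C Fr := by
  intro fuel
  induction fuel with
  | zero =>
    intro C Fr Xc pd z hfuel hXcC hdisj hpd hpdn hz0 hz1 hsize hpot
    have hFr : Fr = ∅ := Finset.card_eq_zero.mp (Nat.le_zero.mp hfuel)
    subst hFr
    exact ⟨rfl, finishPD hXcC hz0 hz1 (by simpa using hsize) hpot⟩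
  | succ n ih =>
    intro C Fr Xc pd z hfuel hXcC hdisj hpd hpdn hz0 hz1 hsize hpot
    rw [ClientCanAux]
    split_ifs with hFrE
    · subst hFrE
      exact finishPD hXcC hz0 hz1 (by simpa using hsize) hpot
    · intro O hOsub hOne hOcard
      have hq1 : (0:ℝ) < (q:ℝ)+1 := by positivity
      set ι : ℝ := ((q:ℝ)+1)⁻¹ with hι
      have hιpos : 0 < ι := by positivity
      have hιq : ((q:ℝ)+1) * ι = 1 := mul_inv_cancel₀ (ne_of_gt hq1)
      have hrpos : 0 < O.card := Finset.card_pos.mpr hOne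
      set ρ : ℝ := (O.card : ℝ) * ι with hρdef
      have hρpos : 0 < ρ := by positivity
      have hρ1 : ρ ≤ 1 := by
        rw [hρdef, ← hιq]
        have : (O.card : ℝ) ≤ (q:ℝ)+1 := by exact_mod_cast hOcard
        exact mul_le_mul_of_nonneg_right this hιpos.le
      have hcardO : O.card ≤ Fr.card := Finset.card_le_card hOsub
      have hFr'card : (Fr \ O).card ≤ n := by
        rw [Finset.card_sdiff_of_subset hOsub]; omega
      have hFr'R : ((Fr \ O).card : ℝ) = (Fr.card : ℝ) - O.card := by
        rw [Finset.card_sdiff_of_subset hOsub, Nat.cast_sub hcardO]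
      have hOnXc : ∀ e ∈ O, e ∉ Xc := fun e he hc =>
        (Finset.disjoint_left.mp hdisj hc) (hOsub he)
      -- case split on the pending element
      rcases pd with _ | y₀
      · -- no pending element; z = 0
        have hz : z = 0 := hpdn rfl
        subst hz
        have hφO : ∀ e ∈ O, phiF ι Xc Fr none 0 e = ι := by
          intro e he
          simp [phiF, hOnXc e he, hOsub he]
        have hΦ : ∀ x ∈ O, (phiF ι Xc (Fr \ O) (some x) ρ) x = ρ ∧
            (∀ e ∈ O, e ≠ x → (phiF ι Xc (Fr \ O) (some x) ρ) e = 0) ∧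
            (∀ e, e ∉ O → (phiF ι Xc (Fr \ O) (some x) ρ) e = phiF ι Xc Fr none 0 e) := by
          intro x hx
          refine ⟨by simp [phiF, hOnXc x hx], ?_, ?_⟩
          · intro e he hex
            have : ¬ (x = e) := fun h => hex (h.symm)
            simp [phiF, hOnXc e he, Finset.mem_sdiff, he, this]
          · intro e heO
            have hxe : ¬ (x = e) := fun h => heO (h ▸ hx)
            by_cases heXc : e ∈ Xc
            · simp [phiF, heXc]
            · simp [phiF, heXc, hxe, Finset.mem_sdiff, heO]
        have HSUM : ∑ x ∈ O, pot F (phiF ι Xc (Fr \ O) (some x) ρ)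
            ≤ ∑ _x ∈ O, pot F (phiF ι Xc Fr none 0) := by
          have step1 : ∑ x ∈ O, pot F (phiF ι Xc (Fr \ O) (some x) ρ)
              = ∑ A ∈ F, ∑ x ∈ O, ∏ e ∈ A, (phiF ι Xc (Fr \ O) (some x) ρ) e := by
            unfold pot; rw [Finset.sum_comm]
          rw [step1, Finset.sum_const, nsmul_eq_mul]
          unfold pot
          rw [Finset.mul_sum]
          exact Finset.sum_le_sum fun A _ =>
            keyA0 (fun e => phiF_nonneg hιpos.le le_rfl _ _ _ e) hφO hΦ rfl A
        obtain ⟨x, hxO, hxle⟩ := Finset.exists_le_of_sum_le hOne HSUM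
        have hxFr : x ∈ Fr := hOsub hxO
        have hxXc : x ∉ Xc := hOnXc x hxO
        have hxFr' : x ∉ Fr \ O := by simp [Finset.mem_sdiff, hxO]
        have hpotx : pot F (phiF ι Xc (Fr \ O) (some x) ρ)
            ≤ ∑ A ∈ F, (((q : ℝ) + 1) ^ A.card)⁻¹ := le_trans hxle hpot
        refine ⟨x, hxO, ?_⟩
        by_cases hrq : O.card = q + 1
        · -- commit x
          have hρ1' : ρ = 1 := by rw [hρdef, hrq, ← hιq]; push_cast; ring
          have hpteq : pot F (phiF ι (insert x Xc) (Fr \ O) none 0)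
              = pot F (phiF ι Xc (Fr \ O) (some x) ρ) := by
            unfold pot
            refine Finset.sum_congr rfl fun A _ => Finset.prod_congr rfl fun e _ => ?_
            by_cases hex : e = x
            · subst hex
              simp [phiF, hxXc, hρ1']
            · have hxe : ¬ (x = e) := fun h => hex h.symm
              by_cases heXc : e ∈ Xc
              · simp [phiF, heXc, Finset.mem_insert, hex]
              · simp [phiF, heXc, Finset.mem_insert, hex, hxe]
          refine ih (insert x C) (Fr \ O) (insert x Xc) none 0 hFr'card
            (Finset.insert_subset_insert x hXcC)
            (Finset.disjoint_insert_left.mpr ⟨hxFr', hdisj.mono_right Finset.sdiff_subset⟩)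
            (fun y h => nomatch h) (fun _ => rfl) le_rfl one_pos ?_ ?_
          · rw [Finset.card_insert_of_notMem hxXc, hFr'R]
            push_cast
            have hrq' : ((O.card : ℕ) : ℝ) = (q:ℝ)+1 := by rw [hrq]; push_cast; ring
            linear_combination hsize - hrq'
          · rw [hpteq]
            exact hpotx
        · -- keep x pending
          have hρlt : ρ < 1 := by
            rw [hρdef, ← hιq]
            have : (O.card : ℝ) < (q:ℝ)+1 := by
              have : O.card < q + 1 := lt_of_le_of_ne hOcard hrq
              exact_mod_cast this
            exact mul_lt_mul_of_pos_right this hιpos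
          refine ih (insert x C) (Fr \ O) Xc (some x) ρ hFr'card
            (hXcC.trans (Finset.subset_insert x C))
            (hdisj.mono_right Finset.sdiff_subset)
            (fun y h => by
              cases h
              exact ⟨Finset.mem_insert_self x C, hxXc, hxFr'⟩)
            (fun h => nomatch h) hρpos.le hρlt ?_ ?_
          · rw [hFr'R]
            have hqρ : ((q:ℝ)+1) * ρ = O.card := by
              rw [hρdef, hι]; field_simp
            linear_combination hsize + hqρ
          · exact hpotx
      · -- pending element y₀
        obtain ⟨hy₀C, hy₀Xc, hy₀Fr⟩ := hpd y₀ rfl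
        have hy₀O : y₀ ∉ O := fun h => hy₀Fr (hOsub h)
        have hqρ : ((q:ℝ)+1) * ρ = O.card := by
          rw [hρdef, hι]; field_simp
        have hφy₀ : phiF ι Xc Fr (some y₀) z y₀ = z := by
          simp [phiF, hy₀Xc]
        have hφO : ∀ e ∈ O, phiF ι Xc Fr (some y₀) z e = ι := by
          intro e he
          have hne : ¬ (y₀ = e) := fun h => hy₀O (h ▸ he)
          simp [phiF, hOnXc e he, hOsub he, hne]
        have hφnn : ∀ e, 0 ≤ phiF ι Xc Fr (some y₀) z e :=
          fun e => phiF_nonneg hιpos.le hz0 _ _ _ e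
        have hOny₀ : ∀ e ∈ O, e ≠ y₀ := fun e he h => hy₀O (h ▸ he)
        by_cases hzρ : z + ρ < 1
        · -- carry stays fractional
          obtain ⟨s, hs⟩ : ∃ s : ℝ, s = z + ρ := ⟨_, rfl⟩
          have hspos : 0 < s := by rw [hs]; linarith
          have hslt : s < 1 := by rw [hs]; exact hzρ
          obtain ⟨p, hp⟩ : ∃ p : ℝ, p = z / s := ⟨_, rfl⟩
          have hps : p * s = z := by rw [hp]; exact div_mul_cancel₀ z hspos.ne'
          have hp0 : 0 ≤ p := by rw [hp]; exact div_nonneg hz0 hspos.le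
          have hp1 : p ≤ 1 := by rw [hp, div_le_one hspos, hs]; linarith
          have hΦ₁ : ∀ x ∈ O, (phiF ι Xc (Fr \ O) (some y₀) s) y₀ = s ∧
              (phiF ι Xc (Fr \ O) (some y₀) s) x = 0 ∧
              (∀ e ∈ O, e ≠ x → (phiF ι Xc (Fr \ O) (some y₀) s) e = 0) ∧
              (∀ e, e ≠ y₀ → e ∉ O →
                (phiF ι Xc (Fr \ O) (some y₀) s) e = phiF ι Xc Fr (some y₀) z e) := by
            intro x hx
            refine ⟨by simp [phiF, hy₀Xc], ?_, ?_, ?_⟩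
            · have h1 : ¬ (y₀ = x) := fun h => hy₀O (h ▸ hx)
              simp [phiF, hOnXc x hx, h1, Finset.mem_sdiff, hx]
            · intro e he _
              have h1 : ¬ (y₀ = e) := fun h => hy₀O (h ▸ he)
              simp [phiF, hOnXc e he, h1, Finset.mem_sdiff, he]
            · intro e hey₀ heO
              have h1 : ¬ (y₀ = e) := fun h => hey₀ h.symm
              by_cases heXc : e ∈ Xc
              · simp [phiF, heXc]
              · simp [phiF, heXc, h1, Finset.mem_sdiff, heO]
          have hΦ₂ : ∀ x ∈ O, (phiF ι Xc (Fr \ O) (some x) s) y₀ = 0 ∧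
              (phiF ι Xc (Fr \ O) (some x) s) x = s ∧
              (∀ e ∈ O, e ≠ x → (phiF ι Xc (Fr \ O) (some x) s) e = 0) ∧
              (∀ e, e ≠ y₀ → e ∉ O →
                (phiF ι Xc (Fr \ O) (some x) s) e = phiF ι Xc Fr (some y₀) z e) := by
            intro x hx
            have hxy₀ : ¬ (x = y₀) := fun h => hy₀O (h ▸ hx)
            refine ⟨?_, by simp [phiF, hOnXc x hx], ?_, ?_⟩
            · simp [phiF, hy₀Xc, hxy₀, hy₀Fr, Finset.mem_sdiff]
            · intro e he hex
              have h1 : ¬ (x = e) := fun h => hex h.symm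
              simp [phiF, hOnXc e he, h1, Finset.mem_sdiff, he]
            · intro e hey₀ heO
              have h1 : ¬ (x = e) := fun h => heO (h ▸ hx)
              have h2 : ¬ (y₀ = e) := fun h => hey₀ h.symm
              by_cases heXc : e ∈ Xc
              · simp [phiF, heXc]
              · simp [phiF, heXc, h1, h2, Finset.mem_sdiff, heO]
          have HSUM : ∑ x ∈ O, (p * pot F (phiF ι Xc (Fr \ O) (some y₀) s)
                + (1 - p) * pot F (phiF ι Xc (Fr \ O) (some x) s))
              ≤ ∑ _x ∈ O, pot F (phiF ι Xc Fr (some y₀) z) := by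
            have step1 : ∀ x ∈ O, p * pot F (phiF ι Xc (Fr \ O) (some y₀) s)
                + (1 - p) * pot F (phiF ι Xc (Fr \ O) (some x) s)
                = ∑ A ∈ F, (p * ∏ e ∈ A, (phiF ι Xc (Fr \ O) (some y₀) s) e
                    + (1 - p) * ∏ e ∈ A, (phiF ι Xc (Fr \ O) (some x) s) e) := by
              intro x _
              unfold pot
              rw [Finset.mul_sum, Finset.mul_sum, ← Finset.sum_add_distrib]
            rw [Finset.sum_congr rfl step1, Finset.sum_comm, Finset.sum_const, nsmul_eq_mul]
            unfold pot
            rw [Finset.mul_sum]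
            refine Finset.sum_le_sum fun A _ => ?_
            refine keyA hφnn hy₀O hφy₀ hφO (fun x hx => hΦ₁ x hx) (fun x hx => hΦ₂ x hx)
              ?_ ?_ ?_ A
            · linear_combination hps
            · linear_combination hs - hps + hρdef
            · have h0 : p * (s * 0) + (1 - p) * (0 * s) = 0 := by ring
              rw [h0, ← hρdef]
              exact mul_nonneg hz0 hρpos.le
          obtain ⟨x, hxO, hxle⟩ := Finset.exists_le_of_sum_le hOne HSUM
          have hxXc : x ∉ Xc := hOnXc x hxO
          have hxFr' : x ∉ Fr \ O := by simp [Finset.mem_sdiff, hxO]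
          have hy₀Fr' : y₀ ∉ Fr \ O := fun h => hy₀Fr (Finset.mem_sdiff.mp h).1
          refine ⟨x, hxO, ?_⟩
          have hsize' : ((q:ℝ)+1) * (Xc.card + s) + ((Fr \ O).card : ℝ) = X.card := by
            rw [hFr'R]
            linear_combination hsize + ((q:ℝ)+1) * hs + hqρ
          rcases convex_min hp0 hp1 hxle with hbr | hbr
          · exact ih (insert x C) (Fr \ O) Xc (some y₀) s hFr'card
              (hXcC.trans (Finset.subset_insert x C))
              (hdisj.mono_right Finset.sdiff_subset)
              (fun y h => by
                cases h
                exact ⟨Finset.mem_insert_of_mem hy₀C, hy₀Xc, hy₀Fr'⟩)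
              (fun h => nomatch h) hspos.le hslt hsize'
              (le_trans hbr hpot)
          · exact ih (insert x C) (Fr \ O) Xc (some x) s hFr'card
              (hXcC.trans (Finset.subset_insert x C))
              (hdisj.mono_right Finset.sdiff_subset)
              (fun y h => by
                cases h
                exact ⟨Finset.mem_insert_self x C, hxXc, hxFr'⟩)
              (fun h => nomatch h) hspos.le hslt hsize'
              (le_trans hbr hpot)
        · -- commit one of the two, carry z + ρ - 1
          push_neg at hzρ
          obtain ⟨s, hs⟩ : ∃ s : ℝ, s = z + ρ - 1 := ⟨_, rfl⟩
          have hs0 : 0 ≤ s := by rw [hs]; linarith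
          have hs1 : s < 1 := by rw [hs]; linarith
          have hdpos : (0:ℝ) < 2 - z - ρ := by linarith
          obtain ⟨p, hp⟩ : ∃ p : ℝ, p = (1 - ρ) / (2 - z - ρ) := ⟨_, rfl⟩
          have hpd2 : p * (2 - z - ρ) = 1 - ρ := by
            rw [hp]; exact div_mul_cancel₀ _ hdpos.ne'
          have hp0 : 0 ≤ p := by
            rw [hp]; exact div_nonneg (by linarith) hdpos.le
          have hp1 : p ≤ 1 := by rw [hp, div_le_one hdpos]; linarith
          have hΦ₁ : ∀ x ∈ O, (phiF ι (insert y₀ Xc) (Fr \ O) (some x) s) y₀ = 1 ∧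
              (phiF ι (insert y₀ Xc) (Fr \ O) (some x) s) x = s ∧
              (∀ e ∈ O, e ≠ x → (phiF ι (insert y₀ Xc) (Fr \ O) (some x) s) e = 0) ∧
              (∀ e, e ≠ y₀ → e ∉ O →
                (phiF ι (insert y₀ Xc) (Fr \ O) (some x) s) e = phiF ι Xc Fr (some y₀) z e) := by
            intro x hx
            have hxy₀ : ¬ (x = y₀) := fun h => hy₀O (h ▸ hx)
            have hxy₀' : ¬ (y₀ = x) := fun h => hxy₀ h.symm
            refine ⟨by simp [phiF], ?_, ?_, ?_⟩
            · simp [phiF, Finset.mem_insert, hxy₀, hOnXc x hx]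
            · intro e he hex
              have h1 : ¬ (e = y₀) := fun h => hy₀O (h ▸ he)
              have h2 : ¬ (x = e) := fun h => hex h.symm
              simp [phiF, Finset.mem_insert, h1, hOnXc e he, h2, Finset.mem_sdiff, he]
            · intro e hey₀ heO
              have h1 : ¬ (x = e) := fun h => heO (h ▸ hx)
              have h2 : ¬ (y₀ = e) := fun h => hey₀ h.symm
              by_cases heXc : e ∈ Xc
              · simp [phiF, Finset.mem_insert, heXc]
              · simp [phiF, Finset.mem_insert, heXc, hey₀, h1, h2, Finset.mem_sdiff, heO]
          have hΦ₂ : ∀ x ∈ O, (phiF ι (insert x Xc) (Fr \ O) (some y₀) s) y₀ = s ∧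
              (phiF ι (insert x Xc) (Fr \ O) (some y₀) s) x = 1 ∧
              (∀ e ∈ O, e ≠ x → (phiF ι (insert x Xc) (Fr \ O) (some y₀) s) e = 0) ∧
              (∀ e, e ≠ y₀ → e ∉ O →
                (phiF ι (insert x Xc) (Fr \ O) (some y₀) s) e = phiF ι Xc Fr (some y₀) z e) := by
            intro x hx
            have hxy₀ : ¬ (x = y₀) := fun h => hy₀O (h ▸ hx)
            have hy₀x : ¬ (y₀ = x) := fun h => hxy₀ h.symm
            refine ⟨?_, by simp [phiF], ?_, ?_⟩
            · simp [phiF, Finset.mem_insert, hy₀x, hy₀Xc]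
            · intro e he hex
              have h1 : ¬ (e = x) := hex
              have h2 : ¬ (y₀ = e) := fun h => hy₀O (h ▸ he)
              simp [phiF, Finset.mem_insert, h1, hOnXc e he, h2, Finset.mem_sdiff, he]
            · intro e hey₀ heO
              have h1 : ¬ (e = x) := fun h => heO (h ▸ hx)
              have h2 : ¬ (y₀ = e) := fun h => hey₀ h.symm
              by_cases heXc : e ∈ Xc
              · simp [phiF, Finset.mem_insert, heXc]
              · simp [phiF, Finset.mem_insert, heXc, h1, h2, Finset.mem_sdiff, heO]
          have HSUM : ∑ x ∈ O, (p * pot F (phiF ι (insert y₀ Xc) (Fr \ O) (some x) s)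
                + (1 - p) * pot F (phiF ι (insert x Xc) (Fr \ O) (some y₀) s))
              ≤ ∑ _x ∈ O, pot F (phiF ι Xc Fr (some y₀) z) := by
            have step1 : ∀ x ∈ O, p * pot F (phiF ι (insert y₀ Xc) (Fr \ O) (some x) s)
                + (1 - p) * pot F (phiF ι (insert x Xc) (Fr \ O) (some y₀) s)
                = ∑ A ∈ F, (p * ∏ e ∈ A, (phiF ι (insert y₀ Xc) (Fr \ O) (some x) s) e
                    + (1 - p) * ∏ e ∈ A, (phiF ι (insert x Xc) (Fr \ O) (some y₀) s) e) := by
              intro x _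
              unfold pot
              rw [Finset.mul_sum, Finset.mul_sum, ← Finset.sum_add_distrib]
            rw [Finset.sum_congr rfl step1, Finset.sum_comm, Finset.sum_const, nsmul_eq_mul]
            unfold pot
            rw [Finset.mul_sum]
            refine Finset.sum_le_sum fun A _ => ?_
            refine keyA hφnn hy₀O hφy₀ hφO (fun x hx => hΦ₁ x hx) (fun x hx => hΦ₂ x hx)
              ?_ ?_ ?_ A
            · linear_combination hpd2 + (1 - p) * hs
            · linear_combination (-1 : ℝ) * hpd2 + p * hs + hρdef
            · have h0 : p * (1 * s) + (1 - p) * (s * 1) = s := by ring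
              rw [h0, ← hρdef, hs]
              nlinarith [mul_nonneg (by linarith : (0:ℝ) ≤ 1 - z)
                (by linarith : (0:ℝ) ≤ 1 - ρ)]
          obtain ⟨x, hxO, hxle⟩ := Finset.exists_le_of_sum_le hOne HSUM
          have hxXc : x ∉ Xc := hOnXc x hxO
          have hxy₀ : ¬ (x = y₀) := fun h => hy₀O (h ▸ hxO)
          have hxFr' : x ∉ Fr \ O := by simp [Finset.mem_sdiff, hxO]
          have hy₀Fr' : y₀ ∉ Fr \ O := fun h => hy₀Fr (Finset.mem_sdiff.mp h).1
          refine ⟨x, hxO, ?_⟩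
          rcases convex_min hp0 hp1 hxle with hbr | hbr
          · -- commit y₀, pend x
            refine ih (insert x C) (Fr \ O) (insert y₀ Xc) (some x) s hFr'card
              (Finset.insert_subset (Finset.mem_insert_of_mem hy₀C)
                (hXcC.trans (Finset.subset_insert x C)))
              (Finset.disjoint_insert_left.mpr
                ⟨hy₀Fr', hdisj.mono_right Finset.sdiff_subset⟩)
              (fun y h => by
                cases h
                exact ⟨Finset.mem_insert_self x C,
                  by simp [Finset.mem_insert, hxy₀, hxXc], hxFr'⟩)
              (fun h => nomatch h) hs0 hs1 ?_ ?_
            · rw [Finset.card_insert_of_notMem hy₀Xc, hFr'R]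
              push_cast
              linear_combination hsize + ((q:ℝ)+1) * hs + hqρ
            · exact le_trans hbr hpot
          · -- commit x, keep y₀ pending
            refine ih (insert x C) (Fr \ O) (insert x Xc) (some y₀) s hFr'card
              (Finset.insert_subset_insert x hXcC)
              (Finset.disjoint_insert_left.mpr
                ⟨hxFr', hdisj.mono_right Finset.sdiff_subset⟩)
              (fun y h => by
                cases h
                refine ⟨Finset.mem_insert_of_mem hy₀C, ?_, hy₀Fr'⟩
                simp only [Finset.mem_insert, not_or]
                exact ⟨fun h => hxy₀ h.symm, hy₀Xc⟩)
              (fun h => nomatch h) hs0 hs1 ?_ ?_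
            · rw [Finset.card_insert_of_notMem hxXc, hFr'R]
              push_cast
              linear_combination hsize + ((q:ℝ)+1) * hs + hqρ
            · exact le_trans hbr hpot

end Stmt10Proof


/-- Theorem (tool): playing a Client-Waiter game on `X` with bias `q`, Client has a
strategy to claim a set containing a subset `X_C` of size at least `⌊|X|/(q+1)⌋` which
fully contains at most `2 Φ(F)` sets of `F`, where `Φ(F) = Σ_{A ∈ F} (q+1)^{-|A|}`. -/

theorem stmt10 {α : Type*} [DecidableEq α] (q : ℕ) (hq : 0 < q) (X : Finset α)
    (F : Finset (Finset α)) :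
    ClientCanForce X q (fun Cl => ∃ Xc ⊆ Cl,
      X.card / (q + 1) ≤ Xc.card ∧
      (((F.filter (fun A => A ⊆ Xc)).card : ℝ)) ≤
        2 * ∑ A ∈ F, (((q : ℝ) + 1) ^ A.card)⁻¹) := by
  unfold ClientCanForce
  refine Stmt10Proof.mainAux q X F X.card ∅ X ∅ none 0 le_rfl (Finset.empty_subset _)
    (Finset.disjoint_empty_left X) (fun y h => nomatch h) (fun _ => rfl) le_rfl one_pos
    (by simp) ?_
  unfold Stmt10Proof.pot
  refine Finset.sum_le_sum fun A _ => ?_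
  by_cases hA : A ⊆ X
  · have h1 : ∀ e ∈ A, Stmt10Proof.phiF (((q:ℝ)+1)⁻¹) ∅ X none 0 e = ((q:ℝ)+1)⁻¹ := by
      intro e he
      simp [Stmt10Proof.phiF, hA he]
    rw [Finset.prod_congr rfl h1, Finset.prod_const, inv_pow]
  · obtain ⟨e, heA, heX⟩ := Finset.not_subset.mp hA
    rw [Finset.prod_eq_zero heA (by simp [Stmt10Proof.phiF, heX])]
    positivity
end
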